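/- arXiv:1704.08184 — 8 statements merged into one kernel-verified Lean document; each statement's English description precedes it below -/
import Mathlib

section
/- Let g be holomorphic on the open unit disk D with g(0) = 1, and suppose that |g(z) − z·g'(z) − 1| < 1 for all z ∈ D. Then the map z ↦ z/g(z) is injective on the set {z ∈ D : g(z) ≠ 0}. (This is Theorem 1a: a function f meromorphic in D with f(0) = 0, f'(0) = 1 satisfying |z/f(z) − z(z/f(z))' − 1| < 1 on D, written as f = z/g, is univalent in D.) -/
open Complex Metric

/-- **Theorem 1a.** If `g` is holomorphic on the unit disk with `g 0 = 1` and
`|g(z) - z g'(z) - 1| < 1` on the disk, then `z ↦ z / g z` is injective on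
`{z ∈ D : g z ≠ 0}` (i.e. the meromorphic function `f = z / g` with
`f(0) = 0`, `f'(0) = 1` satisfying `|z/f - z (z/f)' - 1| < 1` is univalent). -/
theorem stmt_0 (g : ℂ → ℂ)
    (hg : DifferentiableOn ℂ g (ball (0 : ℂ) 1))
    (hg0 : g 0 = 1)
    (hcond : ∀ z ∈ ball (0 : ℂ) 1, ‖g z - z * deriv g z - 1‖ < 1) :
    Set.InjOn (fun z => z / g z) {z ∈ ball (0 : ℂ) 1 | g z ≠ 0} := by
  have hzero : (0 : ℂ) ∈ ball (0 : ℂ) 1 := by simp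
  have hnhds : ball (0 : ℂ) 1 ∈ nhds (0 : ℂ) := isOpen_ball.mem_nhds hzero
  -- deriv g is differentiable on the ball
  have hga : AnalyticOnNhd ℂ g (ball (0 : ℂ) 1) := hg.analyticOnNhd isOpen_ball
  have hg' : DifferentiableOn ℂ (deriv g) (ball (0 : ℂ) 1) :=
    (hga.deriv).differentiableOn
  set ψ : ℂ → ℂ := fun z => g z - z * deriv g z - 1 with hψdef
  have hψ : DifferentiableOn ℂ ψ (ball (0 : ℂ) 1) :=
    (hg.sub ((differentiableOn_id).mul hg')).sub (differentiableOn_const 1)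
  have hψ0 : ψ 0 = 0 := by simp [hψdef, hg0]
  -- First Schwarz application
  have hmaps1 : Set.MapsTo ψ (ball (0 : ℂ) 1) (ball (ψ 0) 1) := by
    intro z hz
    rw [hψ0, mem_ball, dist_zero_right]
    exact hcond z hz
  set ψ₁ : ℂ → ℂ := dslope ψ 0 with hψ₁def
  have hψ₁bd : ∀ z ∈ ball (0 : ℂ) 1, ‖ψ₁ z‖ ≤ 1 := by
    intro z hz
    have := norm_dslope_le_div_of_mapsTo_ball hψ (hmaps1.mono_right ball_subset_closedBall) hz
    simpa using this
  have hψ₁ : DifferentiableOn ℂ ψ₁ (ball (0 : ℂ) 1) :=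
    (Complex.differentiableOn_dslope hnhds).mpr hψ
  -- ψ₁ 0 = deriv ψ 0 = 0
  have hψ₁0 : ψ₁ 0 = 0 := by
    have hdg : DifferentiableAt ℂ g 0 := hg.differentiableAt hnhds
    have hdg' : DifferentiableAt ℂ (deriv g) 0 := hg'.differentiableAt hnhds
    have h1 : HasDerivAt g (deriv g 0) 0 := hdg.hasDerivAt
    have h2 : HasDerivAt (deriv g) (deriv (deriv g) 0) 0 := hdg'.hasDerivAt
    have h3 : HasDerivAt (fun z : ℂ => z * deriv g z)
        (1 * deriv g 0 + 0 * deriv (deriv g) 0) 0 := (hasDerivAt_id 0).mul h2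
    have h4 : HasDerivAt ψ (deriv g 0 - (1 * deriv g 0 + 0 * deriv (deriv g) 0)) 0 := by
      simpa [hψdef] using (h1.sub h3).sub_const 1
    have : deriv ψ 0 = 0 := by
      rw [h4.deriv]; ring
    rw [hψ₁def, dslope_same, this]
  -- Second Schwarz application via a limiting argument
  set ψ₂ : ℂ → ℂ := dslope ψ₁ 0 with hψ₂def
  have hψ₂bd : ∀ z ∈ ball (0 : ℂ) 1, ‖ψ₂ z‖ ≤ 1 := by
    intro z hz
    rw [mem_ball, dist_zero_right] at hz
    have key : ∀ r : ℝ, ‖z‖ < r → r < 1 → ‖ψ₂ z‖ ≤ (2 - r) / r := by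
      intro r hr1 hr2
      have hmaps2 : Set.MapsTo ψ₁ (ball (0 : ℂ) r) (ball (ψ₁ 0) (2 - r)) := by
        intro w hw
        rw [hψ₁0, mem_ball, dist_zero_right]
        have hw1 : w ∈ ball (0 : ℂ) 1 := by
          rw [mem_ball, dist_zero_right] at hw ⊢; linarith
        have := hψ₁bd w hw1
        linarith
      exact norm_dslope_le_div_of_mapsTo_ball
        (hψ₁.mono (ball_subset_ball hr2.le)) (hmaps2.mono_right ball_subset_closedBall) (by rwa [mem_ball, dist_zero_right])
    have hlim : Filter.Tendsto (fun r : ℝ => (2 - r) / r) (nhdsWithin 1 (Set.Iio (1 : ℝ)))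
        (nhds 1) := by
      have h : Filter.Tendsto (fun r : ℝ => (2 - r) / r) (nhds 1)
          (nhds ((2 - 1) / 1 : ℝ)) :=
        (Filter.Tendsto.sub tendsto_const_nhds Filter.tendsto_id).div
          Filter.tendsto_id (by norm_num)
      norm_num at h
      exact h.mono_left nhdsWithin_le_nhds
    refine ge_of_tendsto hlim ?_
    filter_upwards [self_mem_nhdsWithin,
      eventually_nhdsWithin_of_eventually_nhds (eventually_gt_nhds hz)] with r h1 h2
    exact key r h2 h1
  -- H = dslope g 0 ; relation of deriv H to ψ₂
  set H : ℂ → ℂ := dslope g 0 with hHdef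
  have hH : DifferentiableOn ℂ H (ball (0 : ℂ) 1) :=
    (Complex.differentiableOn_dslope hnhds).mpr hg
  have hderivH : ∀ z ∈ ball (0 : ℂ) 1, z ≠ 0 → deriv H z = -ψ₂ z := by
    intro z hz hz0
    have hdg : DifferentiableAt ℂ g z := hg.differentiableAt (isOpen_ball.mem_nhds hz)
    -- H agrees with w ↦ (g w - 1)/w near z
    have heq : H =ᶠ[nhds z] fun w => (g w - 1) / w := by
      filter_upwards [isOpen_ne.mem_nhds hz0] with w hw
      rw [hHdef, dslope_of_ne _ hw, slope_def_field, hg0, sub_zero]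
    have hder : HasDerivAt (fun w => (g w - 1) / w)
        ((deriv g z * z - (g z - 1) * 1) / z ^ 2) z :=
      ((hdg.hasDerivAt.sub_const 1).div (hasDerivAt_id z) hz0)
    have : deriv H z = (deriv g z * z - (g z - 1) * 1) / z ^ 2 := by
      rw [heq.deriv_eq, hder.deriv]
    rw [this]
    have hψ₂z : ψ₂ z = ψ z / z ^ 2 := by
      rw [hψ₂def, dslope_of_ne _ hz0, slope_def_field, hψ₁0, sub_zero, sub_zero,
        hψ₁def, dslope_of_ne _ hz0, slope_def_field, hψ0, sub_zero, sub_zero, div_div]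
      ring_nf
    rw [hψ₂z, hψdef]
    field_simp
    ring
  have hbd : ∀ z ∈ ball (0 : ℂ) 1, ‖deriv H z‖ ≤ 1 := by
    intro z hz
    rcases eq_or_ne z 0 with rfl | hz0
    · -- continuity at 0
      have hc : ContinuousAt (deriv H) 0 :=
        (((hH.analyticOnNhd isOpen_ball).deriv 0 hzero).continuousAt)
      have hev : ∀ᶠ w in nhdsWithin (0 : ℂ) {(0 : ℂ)}ᶜ, ‖deriv H w‖ ≤ 1 := by
        filter_upwards [nhdsWithin_le_nhds hnhds, self_mem_nhdsWithin] with w hw hw0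
        rw [hderivH w hw hw0, norm_neg]
        exact hψ₂bd w hw
      exact le_of_tendsto ((hc.tendsto.mono_left nhdsWithin_le_nhds).norm) hev
    · rw [hderivH z hz hz0, norm_neg]
      exact hψ₂bd z hz
  -- Lipschitz bound
  have hlip : ∀ z₁ ∈ ball (0 : ℂ) 1, ∀ z₂ ∈ ball (0 : ℂ) 1, ‖H z₂ - H z₁‖ ≤ 1 * ‖z₂ - z₁‖ := by
    intro z₁ hz₁ z₂ hz₂
    exact (convex_ball (0 : ℂ) 1).norm_image_sub_le_of_norm_deriv_le
      (fun x hx => hH.differentiableAt (isOpen_ball.mem_nhds hx)) hbd hz₁ hz₂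
  -- Main argument
  intro z₁ hz₁ z₂ hz₂ heq
  obtain ⟨hz₁b, hg₁⟩ := hz₁
  obtain ⟨hz₂b, hg₂⟩ := hz₂
  simp only at heq
  by_contra hne
  have hz₁0 : z₁ ≠ 0 := by
    rintro rfl
    rw [zero_div, eq_comm, div_eq_zero_iff] at heq
    rcases heq with h | h
    · exact hne h.symm
    · exact hg₂ h
  have hz₂0 : z₂ ≠ 0 := by
    rintro rfl
    rw [zero_div, div_eq_zero_iff] at heq
    rcases heq with h | h
    · exact hne h
    · exact hg₁ h
  have hcross : z₁ * g z₂ = z₂ * g z₁ := by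
    field_simp at heq
    linear_combination heq
  have hH₁ : H z₁ = (g z₁ - 1) / z₁ := by
    rw [hHdef, dslope_of_ne _ hz₁0, slope_def_field, hg0, sub_zero]
  have hH₂ : H z₂ = (g z₂ - 1) / z₂ := by
    rw [hHdef, dslope_of_ne _ hz₂0, slope_def_field, hg0, sub_zero]
  have hkey : H z₂ - H z₁ = (z₂ - z₁) / (z₁ * z₂) := by
    rw [hH₁, hH₂]
    field_simp
    linear_combination hcross
  have hle := hlip z₁ hz₁b z₂ hz₂b
  rw [hkey, one_mul] at hle
  rw [norm_div, norm_mul] at hle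
  have h12 : (0 : ℝ) < ‖z₂ - z₁‖ :=
    norm_pos_iff.mpr (sub_ne_zero.2 fun h => hne h.symm)
  have hb1 : ‖z₁‖ * ‖z₂‖ < 1 := by
    rw [mem_ball, dist_zero_right] at hz₁b hz₂b
    calc ‖z₁‖ * ‖z₂‖ < 1 * 1 := by
          apply mul_lt_mul' hz₁b.le hz₂b (norm_nonneg _) one_pos
    _ = 1 := one_mul 1
  have hb0 : 0 < ‖z₁‖ * ‖z₂‖ :=
    mul_pos (norm_pos_iff.mpr hz₁0) (norm_pos_iff.mpr hz₂0)
  rw [div_le_iff₀ hb0] at hle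
  nlinarith
end

section
/- Let g be holomorphic on the open unit disk D with g(0) = 1. Then |g(z) − z·g'(z) − 1| < 1 for all z ∈ D if and only if there exist a constant c ∈ ℂ and a holomorphic function ω on D with |ω(z)| ≤ 1 for all z ∈ D such that g(z) = 1 + c·z − z·∫₀ᶻ ω(t) dt for all z ∈ D, the integral being along the straight line segment from 0 to z. (This is the equivalence of condition (f1) with the representation (f3).) -/
open Complex Metric

/-- Contour integral of `ω` along the straight line segment from `z₁` to `z₂`:
`∫_{z₁}^{z₂} ω(t) dt = (z₂ - z₁) ∫₀¹ ω(z₁ + s (z₂ - z₁)) ds`. -/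
noncomputable def segInt (ω : ℂ → ℂ) (z₁ z₂ : ℂ) : ℂ :=
  (z₂ - z₁) * ∫ s in (0:ℝ)..(1:ℝ), ω (z₁ + (s : ℂ) * (z₂ - z₁))

open MeasureTheory
open scoped Topology

lemma segInt_zero (ω : ℂ → ℂ) (z : ℂ) :
    segInt ω 0 z = ∫ s in (0:ℝ)..(1:ℝ), z * ω ((s : ℂ) * z) := by
  simp [segInt, intervalIntegral.integral_const_mul]

lemma mem_ball_of_seg {z : ℂ} (hz : z ∈ ball (0:ℂ) 1) {s : ℝ} (hs0 : 0 ≤ s) (hs1 : s ≤ 1) :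
    (s : ℂ) * z ∈ ball (0:ℂ) 1 := by
  rw [mem_ball_zero_iff] at hz ⊢
  calc ‖(s : ℂ) * z‖ = |s| * ‖z‖ := by rw [norm_mul, Complex.norm_real, Real.norm_eq_abs]
    _ ≤ 1 * ‖z‖ := by
        apply mul_le_mul_of_nonneg_right _ (norm_nonneg _)
        rw [_root_.abs_of_nonneg hs0]; exact hs1
    _ < 1 := by rwa [one_mul]

lemma segInt_eq_of_hasDerivAt {ω u : ℂ → ℂ}
    (hu : ∀ w ∈ ball (0:ℂ) 1, HasDerivAt u (ω w) w)
    (hω : ContinuousOn ω (ball (0:ℂ) 1)) {z : ℂ} (hz : z ∈ ball (0:ℂ) 1) :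
    segInt ω 0 z = u z - u 0 := by
  have hmem : ∀ s ∈ Set.uIcc (0:ℝ) 1, (s : ℂ) * z ∈ ball (0:ℂ) 1 := by
    intro s hs
    rw [Set.uIcc_of_le zero_le_one, Set.mem_Icc] at hs
    exact mem_ball_of_seg hz hs.1 hs.2
  have hφ : ∀ s ∈ Set.uIcc (0:ℝ) 1,
      HasDerivAt (fun t : ℝ => u ((t : ℂ) * z)) (z * ω ((s : ℂ) * z)) s := by
    intro s hs
    have hψ : HasDerivAt (fun t : ℝ => (t : ℂ) * z) z s := by
      simpa using ((hasDerivAt_id s).ofReal_comp.mul_const z)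
    have := (hu _ (hmem s hs)).scomp s hψ
    rw [smul_eq_mul] at this
    exact this
  have hcont : ContinuousOn (fun s : ℝ => z * ω ((s : ℂ) * z)) (Set.uIcc (0:ℝ) 1) := by
    apply ContinuousOn.mul continuousOn_const
    exact hω.comp (by fun_prop) hmem
  have := intervalIntegral.integral_eq_sub_of_hasDerivAt hφ hcont.intervalIntegrable
  rw [segInt_zero, this]
  norm_num

lemma hasDerivAt_segInt {ω : ℂ → ℂ} (hω : DifferentiableOn ℂ ω (ball (0:ℂ) 1))
    {z₀ : ℂ} (hz₀ : z₀ ∈ ball (0:ℂ) 1) :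
    HasDerivAt (fun z => segInt ω 0 z) (ω z₀) z₀ := by
  rw [mem_ball_zero_iff] at hz₀
  set r : ℝ := (‖z₀‖ + 1) / 2 with hr
  have hrz : ‖z₀‖ < r := by rw [hr]; linarith
  have hr1 : r < 1 := by rw [hr]; linarith
  have hr0 : 0 < r := lt_of_le_of_lt (norm_nonneg _) hrz
  have hKsub : closedBall (0:ℂ) r ⊆ ball (0:ℂ) 1 := by
    intro w hw
    rw [mem_closedBall_zero_iff] at hw
    rw [mem_ball_zero_iff]
    exact lt_of_le_of_lt hw hr1
  set ε : ℝ := r - ‖z₀‖ with hε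
  have hε0 : 0 < ε := by rw [hε]; linarith
  -- membership
  have hmem : ∀ z ∈ ball z₀ ε, ∀ s : ℝ, |s| ≤ 1 → (s : ℂ) * z ∈ closedBall (0:ℂ) r := by
    intro z hz s hs
    rw [mem_ball] at hz
    rw [mem_closedBall_zero_iff, norm_mul, Complex.norm_real, Real.norm_eq_abs]
    have hznorm : ‖z‖ < r := by
      calc ‖z‖ ≤ ‖z - z₀‖ + ‖z₀‖ := by
            simpa using norm_add_le (z - z₀) z₀
        _ < ε + ‖z₀‖ := by
            rw [dist_eq_norm] at hz; linarith
        _ = r := by rw [hε]; ring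
    calc |s| * ‖z‖ ≤ 1 * r := by
          exact mul_le_mul hs hznorm.le (norm_nonneg _) zero_le_one
      _ = r := one_mul r
  -- continuity of ω and deriv ω on the closed ball
  have hωc : ContinuousOn ω (closedBall (0:ℂ) r) := (hω.continuousOn).mono hKsub
  have hω' : AnalyticOnNhd ℂ (deriv ω) (ball (0:ℂ) 1) :=
    (hω.analyticOnNhd isOpen_ball).deriv
  have hω'c : ContinuousOn (deriv ω) (closedBall (0:ℂ) r) :=
    (hω'.continuousOn).mono hKsub
  -- bounds
  obtain ⟨M₁, hM₁⟩ := (isCompact_closedBall (0:ℂ) r).exists_bound_of_continuousOn hωc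
  obtain ⟨M₂, hM₂⟩ := (isCompact_closedBall (0:ℂ) r).exists_bound_of_continuousOn hω'c
  have hM₂0 : 0 ≤ M₂ := le_trans (norm_nonneg _) (hM₂ 0 (mem_closedBall_self hr0.le))
  set F : ℂ → ℝ → ℂ := fun z s => z * ω ((s : ℂ) * z) with hF
  set F' : ℂ → ℝ → ℂ := fun z s => 1 * ω ((s : ℂ) * z) + z * (deriv ω ((s : ℂ) * z) * (s : ℂ))
    with hF'
  have habs : ∀ s : ℝ, s ∈ Set.Ioc (0:ℝ) 1 → |s| ≤ 1 := fun s hs => by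
    rw [_root_.abs_of_nonneg hs.1.le]; exact hs.2
  have habs' : ∀ s : ℝ, s ∈ Set.uIcc (0:ℝ) 1 → |s| ≤ 1 := fun s hs => by
    rw [Set.uIcc_of_le zero_le_one, Set.mem_Icc] at hs
    rw [_root_.abs_of_nonneg hs.1]; exact hs.2
  have hz₀self : z₀ ∈ ball z₀ ε := mem_ball_self hε0
  have hcF : ∀ z ∈ ball z₀ ε, ContinuousOn (F z) (Set.uIcc (0:ℝ) 1) := by
    intro z hz
    apply ContinuousOn.mul continuousOn_const
    exact hωc.comp (by fun_prop) (fun s hs => hmem z hz s (habs' s hs))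
  have hF_meas : ∀ᶠ x in 𝓝 z₀, AEStronglyMeasurable (F x) (volume.restrict (Set.uIoc (0:ℝ) 1)) := by
    filter_upwards [ball_mem_nhds z₀ hε0] with x hx
    have : Set.uIoc (0:ℝ) 1 = Set.Ioc (0:ℝ) 1 := Set.uIoc_of_le zero_le_one
    rw [this]
    exact ((hcF x hx).mono (by rw [Set.uIcc_of_le zero_le_one]; exact Set.Ioc_subset_Icc_self)).aestronglyMeasurable measurableSet_Ioc
  have hF_int : IntervalIntegrable (F z₀) volume 0 1 := (hcF z₀ hz₀self).intervalIntegrable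
  have hcF' : ContinuousOn (F' z₀) (Set.uIcc (0:ℝ) 1) := by
    apply ContinuousOn.add
    · apply ContinuousOn.mul continuousOn_const
      exact hωc.comp (by fun_prop) (fun s hs => hmem z₀ hz₀self s (habs' s hs))
    · apply ContinuousOn.mul continuousOn_const
      apply ContinuousOn.mul
      · exact hω'c.comp (by fun_prop) (fun s hs => hmem z₀ hz₀self s (habs' s hs))
      · fun_prop
  have hF'_meas : AEStronglyMeasurable (F' z₀) (volume.restrict (Set.uIoc (0:ℝ) 1)) := by
    have : Set.uIoc (0:ℝ) 1 = Set.Ioc (0:ℝ) 1 := Set.uIoc_of_le zero_le_one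
    rw [this]
    exact (hcF'.mono (by rw [Set.uIcc_of_le zero_le_one]; exact Set.Ioc_subset_Icc_self)).aestronglyMeasurable measurableSet_Ioc
  have h_bound : ∀ᵐ s ∂(volume : Measure ℝ), s ∈ Set.uIoc (0:ℝ) 1 →
      ∀ x ∈ ball z₀ ε, ‖F' x s‖ ≤ M₁ + M₂ := by
    apply MeasureTheory.ae_of_all
    intro s hs x hx
    rw [Set.uIoc_of_le zero_le_one] at hs
    have hmemx := hmem x hx s (habs s hs)
    have hx1 : ‖x‖ < 1 := by
      rw [mem_closedBall_zero_iff] at hmemx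
      have := hmem x hx 1 (by norm_num)
      rw [mem_closedBall_zero_iff] at this
      simpa using lt_of_le_of_lt (by simpa using this) hr1
    calc ‖F' x s‖ ≤ ‖1 * ω ((s:ℂ)*x)‖ + ‖x * (deriv ω ((s:ℂ)*x) * (s:ℂ))‖ := norm_add_le _ _
      _ ≤ M₁ + M₂ := by
          apply add_le_add
          · rw [one_mul]; exact hM₁ _ hmemx
          · rw [norm_mul, norm_mul, Complex.norm_real, Real.norm_eq_abs]
            calc ‖x‖ * (‖deriv ω ((s:ℂ)*x)‖ * |s|) ≤ 1 * (M₂ * 1) := by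
                  apply mul_le_mul hx1.le _ (by positivity) zero_le_one
                  exact mul_le_mul (hM₂ _ hmemx) (habs s hs) (abs_nonneg s) hM₂0
              _ = M₂ := by ring
  have bound_integrable : IntervalIntegrable (fun _ : ℝ => M₁ + M₂) volume 0 1 :=
    intervalIntegrable_const
  have h_diff : ∀ᵐ s ∂(volume : Measure ℝ), s ∈ Set.uIoc (0:ℝ) 1 →
      ∀ x ∈ ball z₀ ε, HasDerivAt (fun z => F z s) (F' x s) x := by
    apply MeasureTheory.ae_of_all
    intro s hs x hx
    rw [Set.uIoc_of_le zero_le_one] at hs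
    have hmemx := hmem x hx s (habs s hs)
    have hωd : HasDerivAt ω (deriv ω ((s:ℂ)*x)) ((s:ℂ)*x) :=
      ((hω.differentiableAt (isOpen_ball.mem_nhds (hKsub hmemx)))).hasDerivAt
    have hinner : HasDerivAt (fun z : ℂ => (s:ℂ) * z) (s:ℂ) x := by
      simpa using (hasDerivAt_id x).const_mul (s:ℂ)
    have hcomp : HasDerivAt (fun z : ℂ => ω ((s:ℂ)*z)) (deriv ω ((s:ℂ)*x) * (s:ℂ)) x :=
      HasDerivAt.comp x hωd hinner
    exact (hasDerivAt_id x).mul hcomp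
  have key := intervalIntegral.hasDerivAt_integral_of_dominated_loc_of_deriv_le (ball_mem_nhds z₀ hε0) hF_meas
    hF_int hF'_meas h_bound bound_integrable h_diff
  have hmain : HasDerivAt (fun z => ∫ s in (0:ℝ)..1, F z s) (∫ s in (0:ℝ)..1, F' z₀ s) z₀ :=
    key.2
  have hfun : (fun z => ∫ s in (0:ℝ)..1, F z s) = fun z => segInt ω 0 z := by
    funext z
    rw [segInt_zero]
  rw [hfun] at hmain
  -- now compute the integral of F' z₀
  have hval : (∫ s in (0:ℝ)..1, F' z₀ s) = ω z₀ := by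
    have hψ : ∀ s ∈ Set.uIcc (0:ℝ) 1,
        HasDerivAt (fun t : ℝ => (t:ℂ) * ω ((t:ℂ) * z₀)) (F' z₀ s) s := by
      intro s hs
      have hmems := hmem z₀ hz₀self s (habs' s hs)
      have h1 : HasDerivAt (fun t : ℝ => (t:ℂ)) 1 s := by
        simpa using (hasDerivAt_id s).ofReal_comp
      have hωd : HasDerivAt ω (deriv ω ((s:ℂ)*z₀)) ((s:ℂ)*z₀) :=
        ((hω.differentiableAt (isOpen_ball.mem_nhds (hKsub hmems)))).hasDerivAt
      have hinner : HasDerivAt (fun t : ℝ => (t:ℂ) * z₀) z₀ s := by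
        simpa using ((hasDerivAt_id s).ofReal_comp.mul_const z₀)
      have h2 : HasDerivAt (fun t : ℝ => ω ((t:ℂ) * z₀)) (z₀ • deriv ω ((s:ℂ)*z₀)) s :=
        hωd.scomp s hinner
      have := h1.mul h2
      rw [hF']
      refine this.congr_deriv ?_
      simp [smul_eq_mul]
      ring
    have := intervalIntegral.integral_eq_sub_of_hasDerivAt hψ hcF'.intervalIntegrable
    rw [this]
    norm_num
  rwa [hval] at hmain

lemma forward_dir (g : ℂ → ℂ)
    (hg : DifferentiableOn ℂ g (ball (0 : ℂ) 1))
    (hg0 : g 0 = 1)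
    (hf1 : ∀ z ∈ ball (0 : ℂ) 1, ‖g z - z * deriv g z - 1‖ < 1) :
    ∃ (c : ℂ) (ω : ℂ → ℂ), DifferentiableOn ℂ ω (ball (0 : ℂ) 1) ∧
        (∀ z ∈ ball (0 : ℂ) 1, ‖ω z‖ ≤ 1) ∧
        ∀ z ∈ ball (0 : ℂ) 1, g z = 1 + c * z - z * segInt ω 0 z := by
  have h0ball : (0:ℂ) ∈ ball (0:ℂ) 1 := mem_ball_self one_pos
  have hnhds : ball (0:ℂ) 1 ∈ 𝓝 (0:ℂ) := isOpen_ball.mem_nhds h0ball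
  set h : ℂ → ℂ := fun w => g w - w * deriv g w - 1 with hh_def
  have hdg : AnalyticOnNhd ℂ (deriv g) (ball (0:ℂ) 1) := (hg.analyticOnNhd isOpen_ball).deriv
  have hh : DifferentiableOn ℂ h (ball (0:ℂ) 1) :=
    (hg.sub (differentiableOn_id.mul hdg.differentiableOn)).sub (differentiableOn_const 1)
  have hh0 : h 0 = 0 := by simp [hh_def, hg0]
  have hderivh0 : deriv h 0 = 0 := by
    have hg0' : HasDerivAt g (deriv g 0) 0 := (hg.differentiableAt hnhds).hasDerivAt
    have hdg0 : HasDerivAt (deriv g) (deriv (deriv g) 0) 0 :=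
      ((hdg 0 h0ball).differentiableAt).hasDerivAt
    have hmul : HasDerivAt (fun w : ℂ => w * deriv g w)
        (1 * deriv g 0 + 0 * deriv (deriv g) 0) 0 := (hasDerivAt_id (0:ℂ)).mul hdg0
    have : HasDerivAt h (deriv g 0 - (1 * deriv g 0 + 0 * deriv (deriv g) 0)) 0 :=
      (hg0'.sub hmul).sub_const 1
    have h2 : HasDerivAt h 0 0 := by convert this using 1; ring
    exact h2.deriv
  set h₁ : ℂ → ℂ := dslope h 0 with hh₁_def
  set ω : ℂ → ℂ := dslope h₁ 0 with hω_def
  have hh₁ : DifferentiableOn ℂ h₁ (ball (0:ℂ) 1) :=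
    (Complex.differentiableOn_dslope hnhds).mpr hh
  have hωd : DifferentiableOn ℂ ω (ball (0:ℂ) 1) :=
    (Complex.differentiableOn_dslope hnhds).mpr hh₁
  have hh₁0 : h₁ 0 = 0 := by rw [hh₁_def, dslope_same]; exact hderivh0
  have hω_eq : ∀ t : ℂ, t ≠ 0 → ω t = h t / t ^ 2 := by
    intro t ht
    rw [hω_def, dslope_of_ne _ ht, slope_def_field, hh₁0, hh₁_def, dslope_of_ne _ ht,
      slope_def_field, hh0]
    simp only [sub_zero]
    rw [div_div, sq]
  -- the bound
  have hbd : ∀ z ∈ ball (0:ℂ) 1, ‖ω z‖ ≤ 1 := by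
    intro z hz
    rw [mem_ball_zero_iff] at hz
    have key : ∀ r : ℝ, ‖z‖ < r → r < 1 → ‖ω z‖ ≤ 1 / r ^ 2 := by
      intro r hzr hr1
      have hr0 : 0 < r := lt_of_le_of_lt (norm_nonneg _) hzr
      have hsub : closedBall (0:ℂ) r ⊆ ball (0:ℂ) 1 := by
        intro w hw
        rw [mem_closedBall_zero_iff] at hw
        rw [mem_ball_zero_iff]
        exact lt_of_le_of_lt hw hr1
      have hdc : DiffContOnCl ℂ ω (ball (0:ℂ) r) :=
        ⟨hωd.mono (ball_subset_ball hr1.le),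
          (hωd.continuousOn).mono (by rw [closure_ball (0:ℂ) hr0.ne']; exact hsub)⟩
      have hfr : ∀ w ∈ frontier (ball (0:ℂ) r), ‖ω w‖ ≤ 1 / r ^ 2 := by
        intro w hw
        rw [frontier_ball (0:ℂ) hr0.ne'] at hw
        have hwn : ‖w‖ = r := by rwa [mem_sphere_zero_iff_norm] at hw
        have hw0 : w ≠ 0 := by
          intro hc; rw [hc] at hwn; simp at hwn; exact hr0.ne' hwn.symm
        have hwb : w ∈ ball (0:ℂ) 1 := by rw [mem_ball_zero_iff, hwn]; exact hr1
        rw [hω_eq w hw0, norm_div, norm_pow, hwn]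
        apply div_le_div_of_nonneg_right (le_of_lt (hf1 w hwb)) (by positivity)
      have := Complex.norm_le_of_forall_mem_frontier_norm_le isBounded_ball hdc hfr
        (z := z) (by rw [closure_ball (0:ℂ) hr0.ne', mem_closedBall_zero_iff]; exact hzr.le)
      exact this
    -- take the limit r → 1⁻
    have hlim : Filter.Tendsto (fun r : ℝ => 1 / r ^ 2) (𝓝[<] 1) (𝓝 1) := by
      have : Filter.Tendsto (fun r : ℝ => 1 / r ^ 2) (𝓝 1) (𝓝 (1 / 1 ^ 2)) := by
        apply Filter.Tendsto.div tendsto_const_nhds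
        · exact (continuous_pow 2).continuousAt
        · norm_num
      simpa using this.mono_left nhdsWithin_le_nhds
    apply ge_of_tendsto hlim
    filter_upwards [Ioo_mem_nhdsLT_of_mem (by exact ⟨hz, le_refl 1⟩ : (1:ℝ) ∈ Set.Ioc ‖z‖ 1)]
      with r hr
    exact key r hr.1 hr.2
  -- the representation
  set c : ℂ := deriv g 0 with hc_def
  set u : ℂ → ℂ := fun w => c - dslope g 0 w with hu_def
  have hu_diff : DifferentiableOn ℂ u (ball (0:ℂ) 1) :=
    (differentiableOn_const c).sub ((Complex.differentiableOn_dslope hnhds).mpr hg)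
  have hu0 : u 0 = 0 := by rw [hu_def]; simp [dslope_same, hc_def]
  have hu_ne : ∀ w ∈ ball (0:ℂ) 1, w ≠ 0 → HasDerivAt u (ω w) w := by
    intro w hw hw0
    have heq : (fun x => c - (g x - 1) * x⁻¹) =ᶠ[𝓝 w] u := by
      filter_upwards [isOpen_compl_singleton.mem_nhds hw0] with x hx
      have hx0 : x ≠ 0 := hx
      rw [hu_def]
      simp only
      rw [dslope_of_ne _ hx0, slope_def_field, hg0]
      field_simp
      ring
    have hgw : HasDerivAt g (deriv g w) w :=
      (hg.differentiableAt (isOpen_ball.mem_nhds hw)).hasDerivAt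
    have hinv : HasDerivAt (fun x : ℂ => x⁻¹) (-(w ^ 2)⁻¹) w := hasDerivAt_inv hw0
    have hmul : HasDerivAt (fun x : ℂ => (g x - 1) * x⁻¹)
        (deriv g w * w⁻¹ + (g w - 1) * -(w ^ 2)⁻¹) w := (hgw.sub_const 1).mul hinv
    have hv : HasDerivAt (fun x => c - (g x - 1) * x⁻¹)
        (0 - (deriv g w * w⁻¹ + (g w - 1) * -(w ^ 2)⁻¹)) w :=
      (hasDerivAt_const w c).sub hmul
    have hval : 0 - (deriv g w * w⁻¹ + (g w - 1) * -(w ^ 2)⁻¹) = ω w := by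
      rw [hω_eq w hw0, hh_def]
      field_simp
      ring
    rw [hval] at hv
    exact hv.congr_of_eventuallyEq heq.symm
  have hu' : ∀ w ∈ ball (0:ℂ) 1, HasDerivAt u (ω w) w := by
    intro w hw
    rcases eq_or_ne w 0 with rfl | hw0
    · have hu_at : DifferentiableAt ℂ u 0 := hu_diff.differentiableAt hnhds
      have hud : HasDerivAt u (deriv u 0) 0 := hu_at.hasDerivAt
      have hkey : deriv u 0 = ω 0 := by
        have heq : deriv u =ᶠ[𝓝[≠] (0:ℂ)] ω := by
          filter_upwards [mem_nhdsWithin_of_mem_nhds hnhds, self_mem_nhdsWithin]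
            with x hx hx0
          exact (hu_ne x hx hx0).deriv
        have hcont1 : ContinuousAt (deriv u) 0 := by
          have := ((hu_diff.analyticOnNhd isOpen_ball).deriv).continuousOn
          exact this.continuousAt hnhds
        have hcont2 : ContinuousAt ω 0 := (hωd.differentiableAt hnhds).continuousAt
        have t1 : Filter.Tendsto (deriv u) (𝓝[≠] (0:ℂ)) (𝓝 (deriv u 0)) :=
          hcont1.continuousWithinAt.tendsto
        have t2 : Filter.Tendsto (deriv u) (𝓝[≠] (0:ℂ)) (𝓝 (ω 0)) :=
          (hcont2.continuousWithinAt.tendsto).congr' heq.symm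
        exact tendsto_nhds_unique t1 t2
      rw [hkey] at hud
      exact hud
    · exact hu_ne w hw hw0
  refine ⟨c, ω, hωd, hbd, ?_⟩
  intro z hz
  have hseg : segInt ω 0 z = u z - u 0 :=
    segInt_eq_of_hasDerivAt hu' (hωd.continuousOn) hz
  rw [hseg, hu0, sub_zero]
  rcases eq_or_ne z 0 with rfl | hz0
  · simp [hg0]
  · rw [hu_def]
    simp only
    rw [dslope_of_ne _ hz0, slope_def_field, hg0]
    field_simp
    ring

lemma reverse_dir (g : ℂ → ℂ)
    (hg : DifferentiableOn ℂ g (ball (0 : ℂ) 1))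
    (c : ℂ) (ω : ℂ → ℂ) (hω : DifferentiableOn ℂ ω (ball (0 : ℂ) 1))
    (hbd : ∀ z ∈ ball (0 : ℂ) 1, ‖ω z‖ ≤ 1)
    (hrep : ∀ z ∈ ball (0 : ℂ) 1, g z = 1 + c * z - z * segInt ω 0 z) :
    ∀ z ∈ ball (0 : ℂ) 1, ‖g z - z * deriv g z - 1‖ < 1 := by
  intro z hz
  have hG : HasDerivAt (fun w => 1 + c * w - w * segInt ω 0 w)
      (c - (1 * segInt ω 0 z + z * ω z)) z := by
    have h1 : HasDerivAt (fun w : ℂ => 1 + c * w) c z := by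
      simpa using ((hasDerivAt_id z).const_mul c).const_add 1
    exact h1.sub ((hasDerivAt_id z).mul (hasDerivAt_segInt hω hz))
  have hgG : g =ᶠ[𝓝 z] fun w => 1 + c * w - w * segInt ω 0 w := by
    filter_upwards [isOpen_ball.mem_nhds hz] with w hw
    exact hrep w hw
  have hderiv : deriv g z = c - (1 * segInt ω 0 z + z * ω z) := by
    rw [Filter.EventuallyEq.deriv_eq hgG]
    exact hG.deriv
  have hzval : g z - z * deriv g z - 1 = z ^ 2 * ω z := by
    rw [hderiv, hrep z hz]; ring
  rw [hzval]
  rw [mem_ball_zero_iff] at hz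
  calc ‖z ^ 2 * ω z‖ = ‖z‖ ^ 2 * ‖ω z‖ := by rw [norm_mul, norm_pow]
    _ ≤ ‖z‖ ^ 2 * 1 := by
        apply mul_le_mul_of_nonneg_left (hbd z (by rwa [mem_ball_zero_iff])) (by positivity)
    _ < 1 := by rw [mul_one]; nlinarith [norm_nonneg z]

/-- Equivalence of condition (f1) with the representation (f3): for `g`
holomorphic on the unit disk with `g 0 = 1`, `|g(z) - z g'(z) - 1| < 1` on the
disk iff `g(z) = 1 + c z - z ∫₀ᶻ ω(t) dt` for some constant `c` and some
holomorphic `ω` with `|ω| ≤ 1` on the disk. -/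
theorem stmt_2 (g : ℂ → ℂ)
    (hg : DifferentiableOn ℂ g (ball (0 : ℂ) 1))
    (hg0 : g 0 = 1) :
    (∀ z ∈ ball (0 : ℂ) 1, ‖g z - z * deriv g z - 1‖ < 1) ↔
      ∃ (c : ℂ) (ω : ℂ → ℂ), DifferentiableOn ℂ ω (ball (0 : ℂ) 1) ∧
        (∀ z ∈ ball (0 : ℂ) 1, ‖ω z‖ ≤ 1) ∧
        ∀ z ∈ ball (0 : ℂ) 1, g z = 1 + c * z - z * segInt ω 0 z := by
  constructor
  · exact forward_dir g hg hg0
  · rintro ⟨c, ω, hω, hbd, hrep⟩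
    exact reverse_dir g hg c ω hω hbd hrep
end

section
/- Let ω be holomorphic on the open unit disk D with |ω(z)| ≤ 1 for all z ∈ D, let c ∈ ℂ, and set A(z) = 1 + c·z − z·∫₀ᶻ ω(t) dt (segment integral). Then A has at most one zero in D; that is, there do not exist distinct z₁, z₂ ∈ D with A(z₁) = A(z₂) = 0. (Consequently, a meromorphic f with f(0) = 0, f'(0) = 1 satisfying |z/f(z) − z(z/f(z))' − 1| < 1 on D has at most one pole in D.) -/
open Complex Metric

lemma cont_comp (ω : ℂ → ℂ) (hc : ContinuousOn ω (ball (0:ℂ) 1)) (w : ℂ) (hw : ‖w‖ < 1) :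
    ContinuousOn (fun t : ℝ => ω ((t:ℂ) * w)) (Set.Icc (0:ℝ) 1) := by
  apply hc.comp ((Complex.continuous_ofReal.mul continuous_const).continuousOn)
  intro t ht
  rw [mem_ball_zero_iff]
  calc ‖(t:ℂ) * w‖ = |t| * ‖w‖ := by rw [norm_mul, Complex.norm_real, Real.norm_eq_abs]
    _ ≤ 1 * ‖w‖ := mul_le_mul_of_nonneg_right (abs_le.mpr ⟨by linarith [ht.1], ht.2⟩) (norm_nonneg w)
    _ < 1 := by simpa using hw

lemma ftc_aux (ω : ℂ → ℂ) (hω : DifferentiableOn ℂ ω (ball (0:ℂ) 1)) (w : ℂ) (hw : ‖w‖ < 1) :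
    ∫ t in (0:ℝ)..1, (ω ((t:ℂ)*w) + (t:ℂ) * (deriv ω ((t:ℂ)*w) * w)) = ω w := by
  have hmem : ∀ t : ℝ, t ∈ Set.Icc (0:ℝ) 1 → (t:ℂ) * w ∈ ball (0:ℂ) 1 := by
    intro t ht
    rw [mem_ball_zero_iff]
    calc ‖(t:ℂ) * w‖ = |t| * ‖w‖ := by rw [norm_mul, Complex.norm_real, Real.norm_eq_abs]
      _ ≤ 1 * ‖w‖ := mul_le_mul_of_nonneg_right (abs_le.mpr ⟨by linarith [ht.1], ht.2⟩) (norm_nonneg w)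
      _ < 1 := by simpa using hw
  have hder : ∀ t ∈ Set.uIcc (0:ℝ) 1,
      HasDerivAt (fun t : ℝ => (t:ℂ) * ω ((t:ℂ)*w))
        (ω ((t:ℂ)*w) + (t:ℂ) * (deriv ω ((t:ℂ)*w) * w)) t := by
    intro t ht
    rw [Set.uIcc_of_le zero_le_one] at ht
    have h1 : HasDerivAt (fun z : ℂ => z * w) w (t:ℂ) := hasDerivAt_mul_const w
    have h2 : HasDerivAt ω (deriv ω ((t:ℂ)*w)) ((t:ℂ)*w) :=
      (hω.differentiableAt (isOpen_ball.mem_nhds (hmem t ht))).hasDerivAt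
    have h3 := (hasDerivAt_id (t:ℂ)).mul (h2.comp (t:ℂ) h1)
    simpa using h3.comp_ofReal
  rw [intervalIntegral.integral_eq_sub_of_hasDerivAt hder ?_]
  · simp
  · apply ContinuousOn.intervalIntegrable
    rw [Set.uIcc_of_le zero_le_one]
    have hc1 := cont_comp ω hω.continuousOn w hw
    have hc2 := cont_comp (deriv ω) ((hω.analyticOnNhd isOpen_ball).deriv).continuousOn w hw
    exact hc1.add ((Complex.continuous_ofReal.continuousOn).mul (hc2.mul continuousOn_const))

lemma seg_norm_le (a b : ℂ) (x : ℝ) (hx : x ∈ Set.Icc (0:ℝ) 1) :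
    ‖a + (x:ℂ) * (b - a)‖ ≤ max ‖a‖ ‖b‖ := by
  have h : a + (x:ℂ) * (b - a) = ((1 - x : ℝ):ℂ) * a + ((x:ℝ):ℂ) * b := by push_cast; ring
  rw [h]
  calc ‖((1 - x : ℝ):ℂ) * a + ((x:ℝ):ℂ) * b‖ ≤ ‖((1 - x:ℝ):ℂ) * a‖ + ‖((x:ℝ):ℂ) * b‖ :=
        norm_add_le _ _
    _ = |1 - x| * ‖a‖ + |x| * ‖b‖ := by
        rw [norm_mul, norm_mul, Complex.norm_real, Complex.norm_real,
          Real.norm_eq_abs, Real.norm_eq_abs]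
    _ = (1 - x) * ‖a‖ + x * ‖b‖ := by
        rw [_root_.abs_of_nonneg (by linarith [hx.2] : (0:ℝ) ≤ 1 - x), _root_.abs_of_nonneg hx.1]
    _ ≤ (1 - x) * max ‖a‖ ‖b‖ + x * max ‖a‖ ‖b‖ := by
        have := le_max_left ‖a‖ ‖b‖; have := le_max_right ‖a‖ ‖b‖
        have h1 : (0:ℝ) ≤ 1 - x := by linarith [hx.2]
        nlinarith [hx.1]
    _ = max ‖a‖ ‖b‖ := by ring

lemma seg_add (ω : ℂ → ℂ) (hω : DifferentiableOn ℂ ω (ball (0:ℂ) 1)) {a b : ℂ}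
    (ha : a ∈ ball (0:ℂ) 1) (hb : b ∈ ball (0:ℂ) 1) :
    segInt ω 0 b - segInt ω 0 a = segInt ω a b := by
  set v : ℂ := b - a with hv
  set m : ℝ := max ‖a‖ ‖b‖ with hmdef
  have hm : m < 1 := max_lt (mem_ball_zero_iff.mp ha) (mem_ball_zero_iff.mp hb)
  have hm0 : 0 ≤ m := le_trans (norm_nonneg a) (le_max_left _ _)
  set δ : ℝ := (1 - m) / (2 * (‖v‖ + 1)) with hδdef
  have hδ : 0 < δ := div_pos (by linarith) (by positivity)
  set ρ : ℝ := m + δ * ‖v‖ with hρdef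
  have hρ : ρ < 1 := by
    have h1 : δ * ‖v‖ ≤ δ * (‖v‖ + 1) := by nlinarith [hδ]
    have h2 : δ * (‖v‖ + 1) = (1 - m) / 2 := by
      rw [hδdef]; field_simp
    rw [hρdef]; nlinarith
  have hρ0 : 0 ≤ ρ := by positivity
  -- points on slightly extended segment stay in closedBall 0 ρ
  have hγIcc : ∀ x : ℝ, x ∈ Set.Icc (0:ℝ) 1 → ‖a + (x:ℂ) * v‖ ≤ m := by
    intro x hx
    have : a + (x:ℂ) * v = (1 - (x:ℝ) : ℝ) * a + (x:ℝ) * b := by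
      push_cast; rw [hv]; ring
    rw [this]
    calc ‖((1 - x : ℝ):ℂ) * a + ((x:ℝ):ℂ) * b‖ ≤ ‖((1 - x:ℝ):ℂ) * a‖ + ‖((x:ℝ):ℂ) * b‖ :=
          norm_add_le _ _
      _ = |1 - x| * ‖a‖ + |x| * ‖b‖ := by
          rw [norm_mul, norm_mul, Complex.norm_real, Complex.norm_real,
            Real.norm_eq_abs, Real.norm_eq_abs]
      _ = (1 - x) * ‖a‖ + x * ‖b‖ := by
          rw [_root_.abs_of_nonneg (by linarith [hx.2] : (0:ℝ) ≤ 1 - x), _root_.abs_of_nonneg hx.1]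
      _ ≤ (1 - x) * m + x * m := by
          have := le_max_left ‖a‖ ‖b‖; have := le_max_right ‖a‖ ‖b‖
          have h1 : (0:ℝ) ≤ 1 - x := by linarith [hx.2]
          nlinarith [hx.1]
      _ = m := by ring
  have hγ : ∀ x : ℝ, x ∈ Set.Icc (-δ) (1+δ) → ‖a + (x:ℂ) * v‖ ≤ ρ := by
    intro x hx
    set y : ℝ := max 0 (min x 1) with hy
    have hyIcc : y ∈ Set.Icc (0:ℝ) 1 := by
      constructor
      · exact le_max_left _ _
      · rw [hy]; rcases le_total x 1 with h | h <;> simp [min_eq_left, min_eq_right, h] <;> linarith [hx.1, hδ]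
    have hxy : |x - y| ≤ δ := by
      rw [hy, abs_le]
      rcases le_total x 0 with h0 | h0
      · have : min x 1 = x := min_eq_left (by linarith)
        rw [this]
        rcases le_total x 0 with _ | _ <;> constructor <;>
          simp [max_eq_left, h0] <;> linarith [hx.1, hδ]
      · rcases le_total x 1 with h1 | h1
        · have : max 0 (min x 1) = x := by rw [min_eq_left h1, max_eq_right h0]
          rw [this]; constructor <;> linarith [hδ]
        · have : max 0 (min x 1) = 1 := by rw [min_eq_right h1]; simp
          rw [this]; constructor <;> linarith [hx.2, hδ]
    have : a + (x:ℂ) * v = (a + (y:ℂ) * v) + ((x - y : ℝ):ℂ) * v := by push_cast; ring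
    rw [this]
    calc ‖(a + (y:ℂ) * v) + ((x - y : ℝ):ℂ) * v‖
        ≤ ‖a + (y:ℂ) * v‖ + ‖((x - y : ℝ):ℂ) * v‖ := norm_add_le _ _
      _ ≤ m + |x - y| * ‖v‖ := by
          rw [norm_mul, Complex.norm_real, Real.norm_eq_abs]
          exact add_le_add (hγIcc y hyIcc) le_rfl
      _ ≤ m + δ * ‖v‖ := by nlinarith [norm_nonneg v]
  have hball : ∀ (t x : ℝ), t ∈ Set.Icc (0:ℝ) 1 → x ∈ Set.Icc (-δ) (1+δ) →
      (t:ℂ) * (a + (x:ℂ)*v) ∈ ball (0:ℂ) 1 := by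
    intro t x ht hx
    rw [mem_ball_zero_iff, norm_mul, Complex.norm_real, Real.norm_eq_abs]
    have h1 := hγ x hx
    have ht' : |t| ≤ 1 := abs_le.mpr ⟨by linarith [ht.1], ht.2⟩
    nlinarith [abs_nonneg t, norm_nonneg (a + (x:ℂ)*v)]
  have hsub : closedBall (0:ℂ) ρ ⊆ ball (0:ℂ) 1 := closedBall_subset_ball hρ
  obtain ⟨C₀, hC₀⟩ := (isCompact_closedBall (0:ℂ) ρ).exists_bound_of_continuousOn
    (hω.continuousOn.mono hsub)
  obtain ⟨C, hC⟩ := (isCompact_closedBall (0:ℂ) ρ).exists_bound_of_continuousOn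
    (((hω.analyticOnNhd isOpen_ball).deriv).continuousOn.mono hsub)
  have hC₀0 : 0 ≤ C₀ := le_trans (norm_nonneg _) (hC₀ 0 (mem_closedBall_self hρ0))
  have hC0 : 0 ≤ C := le_trans (norm_nonneg _) (hC 0 (mem_closedBall_self hρ0))
  set F : ℝ → ℝ → ℂ := fun x t => (a + (x:ℂ)*v) * ω ((t:ℂ)*(a + (x:ℂ)*v)) with hF
  set F' : ℝ → ℝ → ℂ := fun x t =>
    v * ω ((t:ℂ)*(a + (x:ℂ)*v)) + (a + (x:ℂ)*v) * (deriv ω ((t:ℂ)*(a + (x:ℂ)*v)) * ((t:ℂ)*v))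
    with hF'
  have hFc : ∀ x : ℝ, x ∈ Set.Icc (-δ) (1+δ) →
      ContinuousOn (fun t => F x t) (Set.Icc (0:ℝ) 1) := by
    intro x hx
    exact continuousOn_const.mul (cont_comp ω hω.continuousOn _ (lt_of_le_of_lt (hγ x hx) hρ))
  have hF'c : ∀ x : ℝ, x ∈ Set.Icc (-δ) (1+δ) →
      ContinuousOn (fun t => F' x t) (Set.Icc (0:ℝ) 1) := by
    intro x hx
    have hw := lt_of_le_of_lt (hγ x hx) hρ
    exact (continuousOn_const.mul (cont_comp ω hω.continuousOn _ hw)).add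
      (continuousOn_const.mul
        ((cont_comp (deriv ω) ((hω.analyticOnNhd isOpen_ball).deriv).continuousOn _ hw).mul
          ((Complex.continuous_ofReal.continuousOn).mul continuousOn_const)))
  have hIoc : Set.uIoc (0:ℝ) 1 = Set.Ioc (0:ℝ) 1 := Set.uIoc_of_le zero_le_one
  have hmemδ : ∀ x₀ ∈ Set.Icc (0:ℝ) 1, ∀ x ∈ ball x₀ δ, x ∈ Set.Icc (-δ) (1+δ) := by
    intro x₀ h0 x hx
    rw [mem_ball, Real.dist_eq, abs_lt] at hx
    exact ⟨by linarith [h0.1, hx.1], by linarith [h0.2, hx.2]⟩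
  have key : ∀ x₀ ∈ Set.uIcc (0:ℝ) 1,
      HasDerivAt (fun x : ℝ => ∫ t in (0:ℝ)..1, F x t) (v * ω (a + (x₀:ℂ)*v)) x₀ := by
    intro x₀ hx₀
    rw [Set.uIcc_of_le zero_le_one] at hx₀
    have hx₀' : x₀ ∈ Set.Icc (-δ) (1+δ) := ⟨by linarith [hx₀.1, hδ], by linarith [hx₀.2, hδ]⟩
    have A1 : ∀ᶠ x in nhds x₀, MeasureTheory.AEStronglyMeasurable (F x)
        (MeasureTheory.volume.restrict (Set.uIoc (0:ℝ) 1)) := by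
      filter_upwards [Metric.ball_mem_nhds x₀ hδ] with x hx
      rw [hIoc]
      exact ((hFc x (hmemδ x₀ hx₀ x hx)).mono Set.Ioc_subset_Icc_self).aestronglyMeasurable
        measurableSet_Ioc
    have A2 : IntervalIntegrable (F x₀) MeasureTheory.volume 0 1 := by
      apply ContinuousOn.intervalIntegrable
      rw [Set.uIcc_of_le zero_le_one]
      exact hFc x₀ hx₀'
    have A3 : MeasureTheory.AEStronglyMeasurable (F' x₀)
        (MeasureTheory.volume.restrict (Set.uIoc (0:ℝ) 1)) := by
      rw [hIoc]
      exact ((hF'c x₀ hx₀').mono Set.Ioc_subset_Icc_self).aestronglyMeasurable measurableSet_Ioc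
    have A4 : ∀ᵐ t ∂MeasureTheory.volume, t ∈ Set.uIoc (0:ℝ) 1 →
        ∀ x ∈ ball x₀ δ, ‖F' x t‖ ≤ ‖v‖ * C₀ + C * ‖v‖ := by
      refine MeasureTheory.ae_of_all _ ?_
      intro t ht x hx
      rw [hIoc] at ht
      have ht' : |t| ≤ 1 := abs_le.mpr ⟨by linarith [ht.1], ht.2⟩
      have hxI := hmemδ x₀ hx₀ x hx
      have hwρ : ‖a + (x:ℂ)*v‖ ≤ ρ := hγ x hxI
      have hptC : (t:ℂ)*(a+(x:ℂ)*v) ∈ closedBall (0:ℂ) ρ := by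
        rw [mem_closedBall_zero_iff, norm_mul, Complex.norm_real, Real.norm_eq_abs]
        nlinarith [abs_nonneg t, norm_nonneg (a+(x:ℂ)*v)]
      have b1 := hC₀ _ hptC
      have b2 := hC _ hptC
      calc ‖F' x t‖ ≤ ‖v * ω ((t:ℂ)*(a + (x:ℂ)*v))‖ +
            ‖(a + (x:ℂ)*v) * (deriv ω ((t:ℂ)*(a + (x:ℂ)*v)) * ((t:ℂ)*v))‖ := norm_add_le _ _
        _ = ‖v‖ * ‖ω ((t:ℂ)*(a + (x:ℂ)*v))‖ +
            ‖a + (x:ℂ)*v‖ * (‖deriv ω ((t:ℂ)*(a + (x:ℂ)*v))‖ * (|t| * ‖v‖)) := by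
            rw [norm_mul, norm_mul, norm_mul, norm_mul, Complex.norm_real, Real.norm_eq_abs]
        _ ≤ ‖v‖ * C₀ + C * ‖v‖ := by
            have e1 : ‖v‖ * ‖ω ((t:ℂ)*(a + (x:ℂ)*v))‖ ≤ ‖v‖ * C₀ :=
              mul_le_mul_of_nonneg_left b1 (norm_nonneg v)
            have e2 : ‖deriv ω ((t:ℂ)*(a + (x:ℂ)*v))‖ * (|t| * ‖v‖) ≤ C * ‖v‖ := by
              have htv : |t| * ‖v‖ ≤ ‖v‖ := by nlinarith [abs_nonneg t, norm_nonneg v]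
              exact mul_le_mul b2 htv (by positivity) hC0
            have e3 : ‖a + (x:ℂ)*v‖ *
                (‖deriv ω ((t:ℂ)*(a + (x:ℂ)*v))‖ * (|t| * ‖v‖)) ≤ 1 * (C * ‖v‖) := by
              apply mul_le_mul (le_trans hwρ hρ.le) e2 (by positivity) zero_le_one
            nlinarith
    have A5 : IntervalIntegrable (fun _ : ℝ => ‖v‖ * C₀ + C * ‖v‖)
        MeasureTheory.volume 0 1 := intervalIntegrable_const
    have A6 : ∀ᵐ t ∂MeasureTheory.volume, t ∈ Set.uIoc (0:ℝ) 1 →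
        ∀ x ∈ ball x₀ δ, HasDerivAt (fun x => F x t) (F' x t) x := by
      refine MeasureTheory.ae_of_all _ ?_
      intro t ht x hx
      rw [hIoc] at ht
      have hxI := hmemδ x₀ hx₀ x hx
      have hpt : (t:ℂ)*(a+(x:ℂ)*v) ∈ ball (0:ℂ) 1 := hball t x ⟨le_of_lt ht.1, ht.2⟩ hxI
      have h1 : HasDerivAt (fun z : ℂ => a + z * v) v (x:ℂ) := by
        simpa using (hasDerivAt_mul_const v).const_add a
      have h2 : HasDerivAt (fun z : ℂ => (t:ℂ) * (a + z * v)) ((t:ℂ) * v) (x:ℂ) :=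
        h1.const_mul _
      have h3 : HasDerivAt ω (deriv ω ((t:ℂ)*(a+(x:ℂ)*v))) ((t:ℂ)*(a+(x:ℂ)*v)) :=
        (hω.differentiableAt (isOpen_ball.mem_nhds hpt)).hasDerivAt
      have h5 := h1.mul (h3.comp (x:ℂ) h2)
      have h6 := h5.comp_ofReal
      simpa [hF, hF', Function.comp] using h6
    have main := (intervalIntegral.hasDerivAt_integral_of_dominated_loc_of_deriv_le
      (Metric.ball_mem_nhds x₀ hδ) A1 A2 A3 A4 A5 A6).2
    have heq : (∫ t in (0:ℝ)..1, F' x₀ t) = v * ω (a + (x₀:ℂ)*v) := by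
      have h1 : ∀ t ∈ Set.uIcc (0:ℝ) 1, F' x₀ t =
          v * (ω ((t:ℂ)*(a + (x₀:ℂ)*v)) +
            (t:ℂ) * (deriv ω ((t:ℂ)*(a + (x₀:ℂ)*v)) * (a + (x₀:ℂ)*v))) := by
        intro t _; rw [hF']; ring
      rw [intervalIntegral.integral_congr h1, intervalIntegral.integral_const_mul,
        ftc_aux ω hω _ (lt_of_le_of_lt (hγ x₀ hx₀') hρ)]
    rw [← heq]
    exact main
  have hInt2 : IntervalIntegrable (fun x : ℝ => v * ω (a + (x:ℂ)*v))
      MeasureTheory.volume 0 1 := by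
    apply ContinuousOn.intervalIntegrable
    rw [Set.uIcc_of_le zero_le_one]
    apply continuousOn_const.mul
    apply hω.continuousOn.comp
      ((continuous_const.add (Complex.continuous_ofReal.mul continuous_const)).continuousOn)
    intro x hx
    exact mem_ball_zero_iff.mpr (lt_of_le_of_lt (hγIcc x hx) hm)
  have hmain := intervalIntegral.integral_eq_sub_of_hasDerivAt key hInt2
  have hH : ∀ x : ℝ, (∫ t in (0:ℝ)..1, F x t) = segInt ω 0 (a + (x:ℂ)*v) := by
    intro x
    simp only [hF, segInt, sub_zero, zero_add]
    rw [intervalIntegral.integral_const_mul]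
  have e1 : a + ((1:ℝ):ℂ)*v = b := by push_cast; rw [hv]; ring
  have e0 : a + ((0:ℝ):ℂ)*v = a := by push_cast; ring
  have lhs : (∫ x in (0:ℝ)..1, v * ω (a + (x:ℂ)*v)) = segInt ω a b := by
    simp only [segInt, ← hv]
    rw [intervalIntegral.integral_const_mul]
  rw [← lhs, hmain]
  simp only [hH 1, hH 0, e1, e0]



/-- The function `A(z) = 1 + c z - z ∫₀ᶻ ω(t) dt`, with `ω` holomorphic and
`|ω| ≤ 1` on the unit disk, has at most one zero in the disk (so a meromorphic
`f` with `f(0)=0`, `f'(0)=1` satisfying condition (f1) has at most one pole). -/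
theorem stmt_7 (ω : ℂ → ℂ) (c : ℂ)
    (hω : DifferentiableOn ℂ ω (ball (0 : ℂ) 1))
    (hbd : ∀ z ∈ ball (0 : ℂ) 1, ‖ω z‖ ≤ 1)
    (A : ℂ → ℂ)
    (hA : ∀ z ∈ ball (0 : ℂ) 1, A z = 1 + c * z - z * segInt ω 0 z) :
    ∀ z₁ ∈ ball (0 : ℂ) 1, ∀ z₂ ∈ ball (0 : ℂ) 1,
      A z₁ = 0 → A z₂ = 0 → z₁ = z₂ := by
  intro z₁ h₁ z₂ h₂ hA1 hA2
  by_contra hne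
  have eq1 : (1:ℂ) + c * z₁ - z₁ * segInt ω 0 z₁ = 0 := by rw [← hA z₁ h₁]; exact hA1
  have eq2 : (1:ℂ) + c * z₂ - z₂ * segInt ω 0 z₂ = 0 := by rw [← hA z₂ h₂]; exact hA2
  have e : z₁ * z₂ * (segInt ω 0 z₁ - segInt ω 0 z₂) = z₂ - z₁ := by
    linear_combination z₁ * eq2 - z₂ * eq1
  rw [seg_add ω hω h₂ h₁] at e
  -- bound the segment integral
  have hmax : max ‖z₂‖ ‖z₁‖ < 1 :=
    max_lt (mem_ball_zero_iff.mp h₂) (mem_ball_zero_iff.mp h₁)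
  have hS : ‖segInt ω z₂ z₁‖ ≤ ‖z₁ - z₂‖ := by
    rw [segInt, norm_mul]
    have hint : ‖∫ s in (0:ℝ)..1, ω (z₂ + (s:ℂ) * (z₁ - z₂))‖ ≤ 1 * |1 - 0| := by
      apply intervalIntegral.norm_integral_le_of_norm_le_const
      intro s hs
      rw [Set.uIoc_of_le zero_le_one] at hs
      apply hbd
      rw [mem_ball_zero_iff]
      exact lt_of_le_of_lt (seg_norm_le z₂ z₁ s ⟨le_of_lt hs.1, hs.2⟩) hmax
    have h1 : ‖∫ s in (0:ℝ)..1, ω (z₂ + (s:ℂ) * (z₁ - z₂))‖ ≤ 1 := by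
      simpa using hint
    nlinarith [norm_nonneg (z₁ - z₂), norm_nonneg (∫ s in (0:ℝ)..1, ω (z₂ + (s:ℂ) * (z₁ - z₂)))]
  have hS' : ‖segInt ω z₂ z₁‖ ≤ ‖z₂ - z₁‖ := by rw [norm_sub_rev]; exact hS
  have hd : 0 < ‖z₂ - z₁‖ := by
    rw [norm_pos_iff]; exact sub_ne_zero.mpr (Ne.symm hne)
  have hnorm : ‖z₂ - z₁‖ = ‖z₁‖ * ‖z₂‖ * ‖segInt ω z₂ z₁‖ := by
    rw [← e, norm_mul, norm_mul]
  have hr1 : ‖z₁‖ < 1 := mem_ball_zero_iff.mp h₁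
  have hr2 : ‖z₂‖ < 1 := mem_ball_zero_iff.mp h₂
  have hp : ‖z₁‖ * ‖z₂‖ < 1 := by nlinarith [norm_nonneg z₁, norm_nonneg z₂]
  have h5 : ‖z₁‖ * ‖z₂‖ * ‖segInt ω z₂ z₁‖ ≤ ‖z₁‖ * ‖z₂‖ * ‖z₂ - z₁‖ :=
    mul_le_mul_of_nonneg_left hS' (mul_nonneg (norm_nonneg z₁) (norm_nonneg z₂))
  have h6 : ‖z₁‖ * ‖z₂‖ * ‖z₂ - z₁‖ < 1 * ‖z₂ - z₁‖ := mul_lt_mul_of_pos_right hp hd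
  linarith
end

section
/- Let ω be holomorphic on the open unit disk D with |ω(z)| ≤ 1 for all z ∈ D, let c ∈ ℂ, and set A(z) = 1 + c·z − z·∫₀ᶻ ω(t) dt (segment integral). If z₀ ∈ D and A(z₀) = 0, then z₀ ≠ 0 and A'(z₀) ≠ 0; that is, every zero of A in D is simple. (Consequently, a pole in D of a meromorphic f with f(0) = 0, f'(0) = 1 satisfying |z/f(z) − z(z/f(z))' − 1| < 1 on D is necessarily a simple pole.) -/
open Complex Metric

/-- Every zero in the unit disk of `A(z) = 1 + c z - z ∫₀ᶻ ω(t) dt` (with `ω`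
holomorphic, `|ω| ≤ 1` on the disk) is a simple zero distinct from `0`: if
`A(z₀) = 0` then `z₀ ≠ 0` and `A'(z₀) ≠ 0`. (So a pole of the corresponding
meromorphic `f = z/A` is necessarily simple.) -/
theorem stmt_8 (ω : ℂ → ℂ) (c : ℂ)
    (hω : DifferentiableOn ℂ ω (ball (0 : ℂ) 1))
    (hbd : ∀ z ∈ ball (0 : ℂ) 1, ‖ω z‖ ≤ 1)
    (A : ℂ → ℂ)
    (hA : ∀ z ∈ ball (0 : ℂ) 1, A z = 1 + c * z - z * segInt ω 0 z)
    (z₀ : ℂ) (hz₀ : z₀ ∈ ball (0 : ℂ) 1) (hzero : A z₀ = 0) :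
    z₀ ≠ 0 ∧ deriv A z₀ ≠ 0 := by
  have h01 : (0:ℂ) ∈ ball (0:ℂ) 1 := by simp
  have hA0 : A 0 = 1 := by simpa [segInt] using hA 0 h01
  have hz0ne : z₀ ≠ 0 := by rintro rfl; rw [hA0] at hzero; exact one_ne_zero hzero
  refine ⟨hz0ne, ?_⟩
  have hzn : ‖z₀‖ < 1 := by simpa [mem_ball, dist_eq_norm] using hz₀
  set r : ℝ := (1 + ‖z₀‖)/2 with hrdef
  have hr0 : ‖z₀‖ < r := by rw [hrdef]; linarith
  have hr1 : r < 1 := by rw [hrdef]; linarith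
  have hrpos : (0:ℝ) ≤ r := le_trans (norm_nonneg _) hr0.le
  have hsub : closedBall (0:ℂ) r ⊆ ball 0 1 := closedBall_subset_ball hr1
  have han : AnalyticOnNhd ℂ ω (ball 0 1) := hω.analyticOnNhd isOpen_ball
  have hω'cont : ContinuousOn (deriv ω) (ball 0 1) := (han.deriv).continuousOn
  obtain ⟨C, hC⟩ := (isCompact_closedBall (0:ℂ) r).exists_bound_of_continuousOn
    (hω'cont.mono hsub)
  set ε : ℝ := r - ‖z₀‖ with hεdef
  have hε : 0 < ε := by rw [hεdef]; linarith
  -- membership facts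
  have hball : ∀ x ∈ ball z₀ ε, ‖x‖ < r := by
    intro x hx
    have : ‖x - z₀‖ < ε := by simpa [mem_ball, dist_eq_norm] using hx
    calc ‖x‖ = ‖x - z₀ + z₀‖ := by ring_nf
      _ ≤ ‖x - z₀‖ + ‖z₀‖ := norm_add_le _ _
      _ < ε + ‖z₀‖ := by linarith
      _ = r := by rw [hεdef]; ring
  have hmemr : ∀ (t:ℝ), |t| ≤ 1 → ∀ x : ℂ, ‖x‖ ≤ r → ((t:ℂ)*x) ∈ closedBall (0:ℂ) r := by
    intro t ht x hx
    simp only [mem_closedBall, dist_zero_right, norm_mul, Complex.norm_real,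
      Real.norm_eq_abs]
    calc |t| * ‖x‖ ≤ 1 * r := mul_le_mul ht hx (norm_nonneg _) zero_le_one
      _ = r := one_mul r
  have hmem1 : ∀ (t:ℝ), |t| ≤ 1 → ∀ x : ℂ, ‖x‖ ≤ r → ((t:ℂ)*x) ∈ ball (0:ℂ) 1 := by
    intro t ht x hx; exact hsub (hmemr t ht x hx)
  have habs : ∀ t ∈ Set.uIcc (0:ℝ) 1, |t| ≤ 1 := by
    intro t ht
    rw [Set.uIcc_of_le zero_le_one] at ht
    rw [abs_le]; constructor <;> linarith [ht.1, ht.2]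
  -- continuity helpers
  have hcomp : Continuous fun t:ℝ => (t:ℂ)*z₀ := by continuity
  have hcont1 : ContinuousOn (fun t:ℝ => ω ((t:ℂ)*z₀)) (Set.uIcc 0 1) :=
    (hω.continuousOn).comp hcomp.continuousOn
      (fun t ht => hmem1 t (habs t ht) z₀ hr0.le)
  have hcont2 : ContinuousOn (fun t:ℝ => (t:ℂ) * deriv ω ((t:ℂ)*z₀)) (Set.uIcc 0 1) :=
    (Complex.continuous_ofReal.continuousOn).mul
      (hω'cont.comp hcomp.continuousOn (fun t ht => hmem1 t (habs t ht) z₀ hr0.le))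
  -- derivative of G z = ∫ t in 0..1, ω (t z) at z₀
  have hmain := intervalIntegral.hasDerivAt_integral_of_dominated_loc_of_deriv_le
    (μ := MeasureTheory.volume) (a := (0:ℝ)) (b := 1) (x₀ := z₀)
    (F := fun z t => ω ((t:ℂ)*z)) (F' := fun z t => (t:ℂ) * deriv ω ((t:ℂ)*z))
    (bound := fun _ => max C 0) (ball_mem_nhds z₀ hε)
    ?hFmeas ?hFint ?hF'meas ?hbound ?hbint ?hdiff
  case hFmeas =>
    filter_upwards [ball_mem_nhds z₀ hε] with x hx
    have : ContinuousOn (fun t:ℝ => ω ((t:ℂ)*x)) (Set.uIoc 0 1) := by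
      refine (hω.continuousOn).comp (Complex.continuous_ofReal.mul continuous_const).continuousOn ?_
      intro t ht
      rw [Set.uIoc_of_le zero_le_one] at ht
      exact hmem1 t (by rw [abs_le]; constructor <;> linarith [ht.1, ht.2]) x (hball x hx).le
    exact this.aestronglyMeasurable measurableSet_uIoc
  case hFint =>
    refine ContinuousOn.intervalIntegrable ?_
    exact (hω.continuousOn).comp hcomp.continuousOn
      (fun t ht => hmem1 t (habs t ht) z₀ hr0.le)
  case hF'meas =>
    have hsub' : Set.uIoc (0:ℝ) 1 ⊆ Set.uIcc 0 1 := Set.uIoc_subset_uIcc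
    exact (hcont2.mono hsub').aestronglyMeasurable measurableSet_uIoc
  case hbound =>
    refine Filter.Eventually.of_forall (fun t ht x hx => ?_)
    rw [Set.uIoc_of_le zero_le_one] at ht
    have ht1 : |t| ≤ 1 := by rw [abs_le]; constructor <;> linarith [ht.1, ht.2]
    have hmem : ((t:ℂ)*x) ∈ closedBall (0:ℂ) r := hmemr t ht1 x (hball x hx).le
    calc ‖(t:ℂ) * deriv ω ((t:ℂ)*x)‖ = |t| * ‖deriv ω ((t:ℂ)*x)‖ := by
          rw [norm_mul, Complex.norm_real, Real.norm_eq_abs]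
      _ ≤ 1 * max C 0 := mul_le_mul ht1 (le_trans (hC _ hmem) (le_max_left _ _))
          (norm_nonneg _) zero_le_one
      _ = max C 0 := one_mul _
  case hbint => exact intervalIntegrable_const
  case hdiff =>
    refine Filter.Eventually.of_forall (fun t ht x hx => ?_)
    rw [Set.uIoc_of_le zero_le_one] at ht
    have ht1 : |t| ≤ 1 := by rw [abs_le]; constructor <;> linarith [ht.1, ht.2]
    have hd : DifferentiableAt ℂ ω ((t:ℂ)*x) :=
      hω.differentiableAt (isOpen_ball.mem_nhds (hmem1 t ht1 x (hball x hx).le))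
    have h1 : HasDerivAt (fun y:ℂ => (t:ℂ)*y) (t:ℂ) x := by
      simpa using (hasDerivAt_id x).const_mul (t:ℂ)
    have h4 : HasDerivAt (fun y:ℂ => ω ((t:ℂ)*y)) (deriv ω ((t:ℂ)*x) * (t:ℂ)) x := by
      simpa [Function.comp_def] using hd.hasDerivAt.comp x h1
    simpa [mul_comm] using h4
  set F₀ : ℂ := ∫ t in (0:ℝ)..1, ω ((t:ℂ)*z₀) with hF₀
  set F₁ : ℂ := ∫ t in (0:ℝ)..1, (t:ℂ) * deriv ω ((t:ℂ)*z₀) with hF₁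
  have hG : HasDerivAt (fun z => ∫ t in (0:ℝ)..1, ω ((t:ℂ)*z)) F₁ z₀ := hmain.2
  -- A equals explicit formula near z₀
  have hAeq : ∀ z ∈ ball (0:ℂ) 1,
      A z = 1 + c*z - z^2 * ∫ t in (0:ℝ)..1, ω ((t:ℂ)*z) := by
    intro z hz
    rw [hA z hz]
    simp only [segInt, sub_zero, zero_add]
    ring
  -- derivative of A at z₀
  have hsq : HasDerivAt (fun z:ℂ => z^2) (2*z₀) z₀ := by
    simpa using hasDerivAt_pow 2 z₀
  have h2 := hsq.mul hG
  have h3 : HasDerivAt (fun z => 1 + c*z - z^2 * ∫ t in (0:ℝ)..1, ω ((t:ℂ)*z))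
      (c*1 - (2*z₀*F₀ + z₀^2*F₁)) z₀ :=
    (((hasDerivAt_id z₀).const_mul c).const_add 1).sub h2
  have hAd : HasDerivAt A (c*1 - (2*z₀*F₀ + z₀^2*F₁)) z₀ := by
    refine h3.congr_of_eventuallyEq ?_
    filter_upwards [isOpen_ball.mem_nhds hz₀] with z hz using hAeq z hz
  have hderiv : deriv A z₀ = c*1 - (2*z₀*F₀ + z₀^2*F₁) := hAd.deriv
  -- FTC identity: F₀ + z₀ * F₁ = ω z₀
  have hFTC : (∫ t in (0:ℝ)..1, (ω ((t:ℂ)*z₀) + (t:ℂ) * (deriv ω ((t:ℂ)*z₀) * z₀)))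
      = (fun t:ℝ => (t:ℂ) * ω ((t:ℂ)*z₀)) (1:ℝ) - (fun t:ℝ => (t:ℂ) * ω ((t:ℂ)*z₀)) (0:ℝ) := by
    refine intervalIntegral.integral_eq_sub_of_hasDerivAt (f := fun t:ℝ => (t:ℂ) * ω ((t:ℂ)*z₀)) (fun t ht => ?_) ?_
    · have ht1 : |t| ≤ 1 := habs t ht
      have hd : DifferentiableAt ℂ ω ((t:ℂ)*z₀) :=
        hω.differentiableAt (isOpen_ball.mem_nhds (hmem1 t ht1 z₀ hr0.le))
      have hg : HasDerivAt (fun w:ℂ => ω (w*z₀)) (deriv ω ((t:ℂ)*z₀) * z₀) (t:ℂ) := by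
        simpa [Function.comp_def] using hd.hasDerivAt.comp (t:ℂ) ((hasDerivAt_id (t:ℂ)).mul_const z₀)
      have hgr : HasDerivAt (fun t:ℝ => ω ((t:ℂ)*z₀)) (deriv ω ((t:ℂ)*z₀) * z₀) t :=
        hg.comp_ofReal
      have hid : HasDerivAt (fun t:ℝ => (t:ℂ)) 1 t := by
        simpa using (hasDerivAt_id t).ofReal_comp
      exact (hid.mul hgr).congr_deriv (by simp)
    · refine ContinuousOn.intervalIntegrable ?_
      exact hcont1.add (hcont2.mul (continuousOn_const : ContinuousOn (fun _ : ℝ => z₀) _) |>.congr (by intro t _; simp only [Pi.mul_apply]; ring))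
  have hkey : F₀ + z₀ * F₁ = ω z₀ := by
    have hint1 : IntervalIntegrable (fun t:ℝ => ω ((t:ℂ)*z₀)) MeasureTheory.volume 0 1 :=
      hcont1.intervalIntegrable
    have hint2 : IntervalIntegrable (fun t:ℝ => (t:ℂ) * (deriv ω ((t:ℂ)*z₀) * z₀))
        MeasureTheory.volume 0 1 :=
      (hcont2.mul (continuousOn_const : ContinuousOn (fun _ : ℝ => z₀) _) |>.congr (by intro t _; simp only [Pi.mul_apply]; ring)).intervalIntegrable
    rw [intervalIntegral.integral_add hint1 hint2] at hFTC
    have : (∫ t in (0:ℝ)..1, (t:ℂ) * (deriv ω ((t:ℂ)*z₀) * z₀)) = z₀ * F₁ := by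
      rw [hF₁, ← intervalIntegral.integral_const_mul]
      congr 1; funext t; ring
    rw [this] at hFTC
    rw [← hF₀] at hFTC
    simpa using hFTC
  -- conclude
  intro hder0
  have e1 : z₀^2 * F₀ = 1 + c*z₀ := by
    have := hAeq z₀ hz₀
    rw [hzero] at this
    rw [← hF₀] at this
    linear_combination this
  have e2 : c*1 - (2*z₀*F₀ + z₀^2*F₁) = 0 := by rw [← hderiv]; exact hder0
  have hfin : z₀^2 * ω z₀ = -1 := by
    linear_combination (-z₀^2) * hkey - e1 - z₀ * e2
  have hnorm : ‖z₀‖^2 * ‖ω z₀‖ = 1 := by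
    have := congrArg norm hfin
    simpa [norm_mul, norm_pow] using this
  have hωb : ‖ω z₀‖ ≤ 1 := hbd z₀ hz₀
  nlinarith [norm_nonneg z₀, norm_nonneg (ω z₀)]
end

section
/- Let λ ∈ (0, 1], p ∈ (0, 1], let ω be holomorphic on the open unit disk D with |ω(z)| ≤ 1 for all z ∈ D, let c ∈ ℂ, and set A(z) = 1 + c·z − λ·z·∫₀ᶻ ω(t) dt (segment integral). If A(z) ≠ 0 for all z with |z| < p, then |c| ≤ (1 + λ·p²)/p. (This is Theorem 3: for a meromorphic f(z) = z + Σ_{n≥2} aₙzⁿ satisfying |z/f(z) − z(z/f(z))' − 1| < λ on D with no pole in {|z| < p}, one has |a₂| ≤ (1 + λp²)/p, since a₂ = −c.) -/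
open Complex Metric

set_option maxHeartbeats 1000000 in
/-- **Theorem 3 (coefficient bound).** Let `λ ∈ (0,1]`, `p ∈ (0,1]`, and
`A(z) = 1 + c z - λ z ∫₀ᶻ ω(t) dt` with `ω` holomorphic, `|ω| ≤ 1` on the unit
disk. If `A` has no zero in `{|z| < p}` (i.e. `f = z/A` has no pole there),
then `|c| ≤ (1 + λ p²)/p` (i.e. `|a₂| ≤ (1 + λ p²)/p` since `a₂ = -c`). -/
theorem stmt_9 (lam p : ℝ) (hlam : lam ∈ Set.Ioc (0 : ℝ) 1)
    (hp : p ∈ Set.Ioc (0 : ℝ) 1)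
    (ω : ℂ → ℂ) (c : ℂ)
    (hω : DifferentiableOn ℂ ω (ball (0 : ℂ) 1))
    (hbd : ∀ z ∈ ball (0 : ℂ) 1, ‖ω z‖ ≤ 1)
    (A : ℂ → ℂ)
    (hA : ∀ z ∈ ball (0 : ℂ) 1, A z = 1 + c * z - (lam : ℂ) * z * segInt ω 0 z)
    (hnozero : ∀ z : ℂ, ‖z‖ < p → A z ≠ 0) :
    ‖c‖ ≤ (1 + lam * p ^ 2) / p := by
  obtain ⟨hlam0, hlam1⟩ := hlam
  obtain ⟨hp0, hp1⟩ := hp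
  by_contra hcon
  push_neg at hcon
  have hcpos : 0 < ‖c‖ := lt_trans (by positivity) hcon
  have hc0 : c ≠ 0 := norm_pos_iff.mp hcpos
  -- choose a radius r < p with 1 + lam r² < ‖c‖ r
  obtain ⟨r, hr0, hrp, hkey⟩ : ∃ r : ℝ, 0 < r ∧ r < p ∧ 1 + lam * r ^ 2 < ‖c‖ * r := by
    set t : ℝ := (1 + lam * p ^ 2) / p / ‖c‖ with ht
    have ht0 : 0 < t := by positivity
    have ht1 : t < 1 := by
      rw [ht, div_lt_one hcpos]
      exact hcon
    have htc : t * ‖c‖ * p = 1 + lam * p ^ 2 := by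
      rw [ht, div_mul_cancel₀ _ (ne_of_gt hcpos), div_mul_cancel₀ _ (ne_of_gt hp0)]
    set τ : ℝ := (t + 1) / 2 with hτ
    have hτt : t < τ := by rw [hτ]; linarith
    have hτ1 : τ < 1 := by rw [hτ]; linarith
    have hτ0 : 0 < τ := lt_trans ht0 hτt
    refine ⟨p * τ, by positivity, ?_, ?_⟩
    · nlinarith
    · have ha : 0 < lam * p ^ 2 := by positivity
      have htτ : t * τ ≤ 1 := by nlinarith
      have h1 : 0 ≤ lam * p ^ 2 * τ * (1 - t * τ) := by
        apply mul_nonneg (by positivity)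
        linarith
      -- goal : 1 + lam * (p*τ)^2 < ‖c‖ * (p*τ)
      have h2 : (1 + lam * (p * τ) ^ 2) * t < (1 + lam * p ^ 2) * τ := by nlinarith
      have h3 : ‖c‖ * (p * τ) * t = (1 + lam * p ^ 2) * τ := by
        have : ‖c‖ * (p * τ) * t = t * ‖c‖ * p * τ := by ring
        rw [this, htc]
      nlinarith
  have hr1 : r < 1 := lt_of_lt_of_le hrp hp1
  have hK : 2 * lam * r < ‖c‖ := by nlinarith [mul_pos hlam0 (mul_pos hr0 hr0)]
  -- auxiliary radii
  set R : ℝ := (r + 1) / 2 with hR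
  have hrR : r < R := by rw [hR]; linarith
  have hR1 : R < 1 := by rw [hR]; linarith
  have hR0 : 0 < R := lt_trans hr0 hrR
  set R' : ℝ := (R + 1) / 2 with hR'
  have hRR' : R < R' := by rw [hR']; linarith
  have hR'1 : R' < 1 := by rw [hR']; linarith
  have hR'0 : 0 < R' := lt_trans hR0 hRR'
  -- basic membership
  have hmem : ∀ z : ℂ, ‖z‖ < 1 → ∀ s : ℝ, 0 ≤ s → s ≤ 1 → (s : ℂ) * z ∈ ball (0 : ℂ) 1 := by
    intro z hz s h0 h1
    rw [mem_ball_zero_iff, norm_mul, Complex.norm_real, Real.norm_eq_abs]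
    have : |s| ≤ 1 := abs_le.mpr ⟨by linarith, h1⟩
    nlinarith [norm_nonneg z, abs_nonneg s]
  have hωcont : ContinuousOn ω (ball (0 : ℂ) 1) := hω.continuousOn
  have hωan : AnalyticOnNhd ℂ ω (ball (0 : ℂ) 1) := hω.analyticOnNhd isOpen_ball
  have hω'cont : ContinuousOn (deriv ω) (ball (0 : ℂ) 1) := hωan.deriv.continuousOn
  -- the functions H and H'
  set H : ℂ → ℂ := fun z => ∫ s in (0:ℝ)..1, ω ((s : ℂ) * z) with hHdef
  set H' : ℂ → ℂ := fun z => ∫ s in (0:ℝ)..1, deriv ω ((s : ℂ) * z) * (s : ℂ) with hH'def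
  -- continuity of integrands
  have hc1 : ∀ z : ℂ, ‖z‖ < 1 →
      ContinuousOn (fun s : ℝ => ω ((s : ℂ) * z)) (Set.uIcc (0:ℝ) 1) := by
    intro z hz
    apply hωcont.comp ((Complex.continuous_ofReal.mul continuous_const).continuousOn)
    intro s hs
    rw [Set.uIcc_of_le (by norm_num : (0:ℝ) ≤ 1)] at hs
    exact hmem z hz s hs.1 hs.2
  have hc2 : ∀ z : ℂ, ‖z‖ < 1 →
      ContinuousOn (fun s : ℝ => deriv ω ((s : ℂ) * z) * (s : ℂ)) (Set.uIcc (0:ℝ) 1) := by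
    intro z hz
    apply ContinuousOn.mul _ Complex.continuous_ofReal.continuousOn
    apply hω'cont.comp ((Complex.continuous_ofReal.mul continuous_const).continuousOn)
    intro s hs
    rw [Set.uIcc_of_le (by norm_num : (0:ℝ) ≤ 1)] at hs
    exact hmem z hz s hs.1 hs.2
  -- bound on H
  have hHbd : ∀ z : ℂ, ‖z‖ < 1 → ‖H z‖ ≤ 1 := by
    intro z hz
    have h := intervalIntegral.norm_integral_le_of_norm_le_const (C := 1)
      (f := fun s : ℝ => ω ((s : ℂ) * z)) (a := (0:ℝ)) (b := 1) ?_
    · simpa using h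
    · intro s hs
      rw [Set.uIoc_of_le (by norm_num : (0:ℝ) ≤ 1)] at hs
      exact hbd _ (hmem z hz s hs.1.le hs.2)
  -- bound on deriv ω on ball 0 R'
  have hCpos : 0 < 1 - R' := by linarith
  set C : ℝ := 3 / (1 - R') with hC
  have hC0 : 0 ≤ C := by positivity
  have hω'bd : ∀ u : ℂ, ‖u‖ < R' → ‖deriv ω u‖ ≤ C := by
    intro u hu
    have hu1 : u ∈ ball (0:ℂ) 1 := by
      rw [mem_ball_zero_iff]; linarith
    have hsub : ball u (1 - R') ⊆ ball (0:ℂ) 1 := by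
      intro w hw
      rw [mem_ball_iff_norm] at hw
      rw [mem_ball_zero_iff]
      calc ‖w‖ ≤ ‖w - u‖ + ‖u‖ := by simpa using norm_add_le (w - u) u
        _ < (1 - R') + R' := by linarith
        _ = 1 := by ring
    have := Complex.norm_deriv_le_div_of_mapsTo_ball (f := ω) (c := u) (R₁ := 1 - R') (R₂ := 3)
      (hω.mono hsub) ?_ hCpos
    · simpa [hC] using this
    · intro w hw
      rw [mem_closedBall_iff_norm]
      apply le_of_lt
      calc ‖ω w - ω u‖ ≤ ‖ω w‖ + ‖ω u‖ := norm_sub_le _ _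
        _ ≤ 1 + 1 := add_le_add (hbd _ (hsub hw)) (hbd _ hu1)
        _ < 3 := by norm_num
  -- derivative of H
  have hHder : ∀ z₀ : ℂ, ‖z₀‖ < R → HasDerivAt H (H' z₀) z₀ := by
    intro z₀ hz₀
    have hε : 0 < R' - R := by linarith
    have hball : ∀ x ∈ ball z₀ (R' - R), ‖x‖ < R' := by
      intro x hx
      rw [mem_ball_iff_norm] at hx
      calc ‖x‖ ≤ ‖x - z₀‖ + ‖z₀‖ := by simpa using norm_add_le (x - z₀) z₀
        _ < (R' - R) + R := by linarith
        _ = R' := by ring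
    have main := intervalIntegral.hasDerivAt_integral_of_dominated_loc_of_deriv_le
      (F := fun x (s : ℝ) => ω ((s : ℂ) * x))
      (F' := fun x (s : ℝ) => deriv ω ((s : ℂ) * x) * (s : ℂ))
      (x₀ := z₀) (bound := fun _ => C)
      (μ := MeasureTheory.volume) (a := (0:ℝ)) (b := 1) (ball_mem_nhds z₀ hε) ?_ ?_ ?_ ?_ ?_ ?_
    · exact main.2
    · filter_upwards [ball_mem_nhds z₀ hε] with x hx
      exact ((hc1 x (lt_trans (hball x hx) hR'1)).mono Set.uIoc_subset_uIcc).aestronglyMeasurable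
        measurableSet_uIoc
    · exact (hc1 z₀ (lt_trans (lt_trans hz₀ hRR') hR'1)).intervalIntegrable
    · exact ((hc2 z₀ (lt_trans (lt_trans hz₀ hRR') hR'1)).mono
        Set.uIoc_subset_uIcc).aestronglyMeasurable measurableSet_uIoc
    · apply Filter.Eventually.of_forall
      intro s hs x hx
      rw [Set.uIoc_of_le (by norm_num : (0:ℝ) ≤ 1)] at hs
      have hsx : ‖(s : ℂ) * x‖ < R' := by
        rw [norm_mul, Complex.norm_real, Real.norm_eq_abs]
        have h1 : |s| ≤ 1 := abs_le.mpr ⟨by linarith [hs.1.le], hs.2⟩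
        nlinarith [norm_nonneg x, abs_nonneg s, hball x hx]
      calc ‖deriv ω ((s : ℂ) * x) * (s : ℂ)‖ = ‖deriv ω ((s : ℂ) * x)‖ * |s| := by
            rw [norm_mul, Complex.norm_real, Real.norm_eq_abs]
        _ ≤ C * 1 := by
            apply mul_le_mul (hω'bd _ hsx) (abs_le.mpr ⟨by linarith [hs.1.le], hs.2⟩)
              (abs_nonneg s) hC0
        _ = C := mul_one C
    · exact intervalIntegrable_const
    · apply Filter.Eventually.of_forall
      intro s hs x hx
      rw [Set.uIoc_of_le (by norm_num : (0:ℝ) ≤ 1)] at hs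
      have hx1 : ‖x‖ < 1 := lt_trans (hball x hx) hR'1
      have hsx : (s : ℂ) * x ∈ ball (0:ℂ) 1 := hmem x hx1 s hs.1.le hs.2
      have hd : DifferentiableAt ℂ ω ((s : ℂ) * x) :=
        hω.differentiableAt (isOpen_ball.mem_nhds hsx)
      have h2 : HasDerivAt (fun y : ℂ => (s : ℂ) * y) (s : ℂ) x := by
        simpa using (hasDerivAt_id x).const_mul (s : ℂ)
      have := hd.hasDerivAt.comp x h2
      exact this
  -- fundamental identity : z * H' z = ω z - H z
  have hfund : ∀ z : ℂ, ‖z‖ < 1 → z * H' z = ω z - H z := by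
    intro z hz
    have hψ : ∀ s ∈ Set.uIcc (0:ℝ) 1, HasDerivAt (fun s : ℝ => (s : ℂ) * ω ((s : ℂ) * z))
        (ω ((s : ℂ) * z) + (s : ℂ) * (deriv ω ((s : ℂ) * z) * z)) s := by
      intro s hs
      rw [Set.uIcc_of_le (by norm_num : (0:ℝ) ≤ 1)] at hs
      have hsz : (s : ℂ) * z ∈ ball (0:ℂ) 1 := hmem z hz s hs.1 hs.2
      have hd : DifferentiableAt ℂ ω ((s : ℂ) * z) :=
        hω.differentiableAt (isOpen_ball.mem_nhds hsz)
      have h1 : HasDerivAt (fun w : ℂ => w * z) z (s : ℂ) := by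
        simpa using (hasDerivAt_id ((s : ℂ))).mul_const z
      have h2 : HasDerivAt (fun w : ℂ => ω (w * z)) (deriv ω ((s : ℂ) * z) * z) (s : ℂ) := by
        have := hd.hasDerivAt.comp ((s : ℂ)) h1
        exact this
      have hΨ : HasDerivAt (fun w : ℂ => w * ω (w * z))
          (1 * ω ((s : ℂ) * z) + (s : ℂ) * (deriv ω ((s : ℂ) * z) * z)) (s : ℂ) :=
        (hasDerivAt_id ((s : ℂ))).mul h2
      have := hΨ.comp_ofReal
      simpa using this
    have hint1 : IntervalIntegrable (fun s : ℝ => ω ((s : ℂ) * z))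
        MeasureTheory.volume 0 1 := (hc1 z hz).intervalIntegrable
    have hcont2 : ContinuousOn (fun s : ℝ => (s : ℂ) * (deriv ω ((s : ℂ) * z) * z))
        (Set.uIcc (0:ℝ) 1) := by
      have : ContinuousOn (fun s : ℝ => (deriv ω ((s : ℂ) * z) * (s : ℂ)) * z)
          (Set.uIcc (0:ℝ) 1) := (hc2 z hz).mul continuousOn_const
      refine this.congr ?_
      intro s _
      ring
    have hint2 : IntervalIntegrable (fun s : ℝ => (s : ℂ) * (deriv ω ((s : ℂ) * z) * z))
        MeasureTheory.volume 0 1 := hcont2.intervalIntegrable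
    have hFTC := intervalIntegral.integral_eq_sub_of_hasDerivAt hψ (hint1.add hint2)
    have hsplit : (∫ s in (0:ℝ)..1, (ω ((s : ℂ) * z) + (s : ℂ) * (deriv ω ((s : ℂ) * z) * z)))
        = H z + ∫ s in (0:ℝ)..1, (s : ℂ) * (deriv ω ((s : ℂ) * z) * z) :=
      intervalIntegral.integral_add hint1 hint2
    have hend : ((1:ℝ) : ℂ) * ω (((1:ℝ) : ℂ) * z) - ((0:ℝ) : ℂ) * ω (((0:ℝ) : ℂ) * z) = ω z := by
      push_cast
      simp
    rw [hsplit, hend] at hFTC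
    have hzH' : z * H' z = ∫ s in (0:ℝ)..1, (s : ℂ) * (deriv ω ((s : ℂ) * z) * z) := by
      rw [hH'def]
      rw [← intervalIntegral.integral_const_mul]
      congr 1
      funext s
      ring
    rw [hzH']
    linear_combination hFTC
  -- the contraction map Φ
  set Φ : ℂ → ℂ := fun z => ((lam : ℂ) * (z ^ 2 * H z) - 1) / c with hΦdef
  set Φ' : ℂ → ℂ := fun z => (lam : ℂ) * (z * H z + z * ω z) / c with hΦ'def
  have hΦder : ∀ z ∈ closedBall (0:ℂ) r, HasDerivAt Φ (Φ' z) z := by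
    intro z hz
    rw [mem_closedBall_zero_iff] at hz
    have hz1 : ‖z‖ < 1 := lt_of_le_of_lt hz hr1
    have hzR : ‖z‖ < R := lt_of_le_of_lt hz hrR
    have h1 : HasDerivAt (fun z : ℂ => z ^ 2 * H z) (2 * z * H z + z ^ 2 * H' z) z := by
      have h0 := (hasDerivAt_pow 2 z).mul (hHder z hzR)
      have he : ((2 : ℕ) : ℂ) * z ^ (2 - 1) * H z + z ^ 2 * H' z
          = 2 * z * H z + z ^ 2 * H' z := by
        push_cast
        ring
      rw [he] at h0
      exact h0
    have h2 := ((h1.const_mul ((lam : ℂ))).sub_const 1).div_const c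
    have hzH : z ^ 2 * H' z = z * (ω z - H z) := by
      rw [pow_two, mul_assoc, hfund z hz1]
    refine h2.congr_deriv ?_
    rw [hΦ'def]
    simp only
    rw [hzH]
    ring
  have hΦ'bd : ∀ z ∈ closedBall (0:ℂ) r, ‖Φ' z‖ ≤ 2 * lam * r / ‖c‖ := by
    intro z hz
    rw [mem_closedBall_zero_iff] at hz
    have hz1 : ‖z‖ < 1 := lt_of_le_of_lt hz hr1
    have hzb : z ∈ ball (0:ℂ) 1 := mem_ball_zero_iff.mpr hz1
    rw [hΦ'def]
    simp only
    rw [norm_div, norm_mul, Complex.norm_real, Real.norm_eq_abs, abs_of_pos hlam0]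
    have hb : ‖z * H z + z * ω z‖ ≤ 2 * r := by
      calc ‖z * H z + z * ω z‖ ≤ ‖z * H z‖ + ‖z * ω z‖ := norm_add_le _ _
        _ = ‖z‖ * ‖H z‖ + ‖z‖ * ‖ω z‖ := by rw [norm_mul, norm_mul]
        _ ≤ r * 1 + r * 1 := by
            apply add_le_add
            · exact mul_le_mul hz (hHbd z hz1) (norm_nonneg _) hr0.le
            · exact mul_le_mul hz (hbd z hzb) (norm_nonneg _) hr0.le
        _ = 2 * r := by ring
    apply div_le_div_of_nonneg_right ?_ hcpos.le
    nlinarith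
  -- Φ maps the closed ball into itself
  have hmaps : Set.MapsTo Φ (closedBall (0:ℂ) r) (closedBall (0:ℂ) r) := by
    intro z hz
    rw [mem_closedBall_zero_iff] at hz ⊢
    have hz1 : ‖z‖ < 1 := lt_of_le_of_lt hz hr1
    rw [hΦdef]
    simp only
    rw [norm_div]
    rw [div_le_iff₀ hcpos]
    have : ‖(lam : ℂ) * (z ^ 2 * H z) - 1‖ ≤ lam * r ^ 2 + 1 := by
      calc ‖(lam : ℂ) * (z ^ 2 * H z) - 1‖ ≤ ‖(lam : ℂ) * (z ^ 2 * H z)‖ + ‖(1:ℂ)‖ :=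
            norm_sub_le _ _
        _ = lam * (‖z‖ ^ 2 * ‖H z‖) + 1 := by
            rw [norm_mul, norm_mul, norm_pow, Complex.norm_real, Real.norm_eq_abs,
              abs_of_pos hlam0, norm_one]
        _ ≤ lam * (r ^ 2 * 1) + 1 := by
            have h1 : ‖z‖ ^ 2 ≤ r ^ 2 := by nlinarith [norm_nonneg z]
            have h2 : ‖z‖ ^ 2 * ‖H z‖ ≤ r ^ 2 * 1 :=
              mul_le_mul h1 (hHbd z hz1) (norm_nonneg _) (by positivity)
            nlinarith
        _ = lam * r ^ 2 + 1 := by ring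
    calc ‖(lam : ℂ) * (z ^ 2 * H z) - 1‖ ≤ lam * r ^ 2 + 1 := this
      _ ≤ r * ‖c‖ := by nlinarith
  -- contraction
  set K : NNReal := Real.toNNReal (2 * lam * r / ‖c‖) with hKdef
  have hKlt : K < 1 := by
    rw [hKdef, ← Real.toNNReal_one]
    exact (Real.toNNReal_lt_toNNReal_iff one_pos).mpr ((div_lt_one hcpos).mpr hK)
  have hlip : LipschitzOnWith K Φ (closedBall (0:ℂ) r) := by
    apply Convex.lipschitzOnWith_of_nnnorm_hasDerivWithin_le (f' := Φ') (convex_closedBall _ _)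
      (fun z hz => (hΦder z hz).hasDerivWithinAt)
    intro z hz
    rw [← NNReal.coe_le_coe]
    rw [hKdef, Real.coe_toNNReal _ (by positivity)]
    exact hΦ'bd z hz
  have hcontract : ContractingWith K (hmaps.restrict Φ _ _) :=
    ⟨hKlt, LipschitzOnWith.mapsToRestrict hmaps hlip⟩
  have hcompl : IsComplete (closedBall (0:ℂ) r) := isClosed_closedBall.isComplete
  obtain ⟨y, hys, hfix, -⟩ := hcontract.exists_fixedPoint' hcompl hmaps
    (x := 0) (by simp [hr0.le]) (edist_ne_top _ _)
  rw [mem_closedBall_zero_iff] at hys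
  have hy1 : y ∈ ball (0:ℂ) 1 := mem_ball_zero_iff.mpr (lt_of_le_of_lt hys hr1)
  have hAy : A y = 0 := by
    have hfix' : ((lam : ℂ) * (y ^ 2 * H y) - 1) / c = y := hfix
    rw [div_eq_iff hc0] at hfix'
    have hseg : segInt ω 0 y = y * H y := by
      rw [hHdef]
      simp [segInt]
    rw [hA y hy1, hseg]
    linear_combination -hfix'
  exact hnozero y (lt_of_le_of_lt hys hrp) hAy
end

section
/- Let λ ∈ (0, 1], p ∈ (0, 1], r ∈ (0, 1), let ω be holomorphic on the open unit disk D with |ω(z)| ≤ 1 for all z ∈ D, and let a₂ ∈ ℂ with |a₂| = (1 + λ·p²)/(p·r). Define F(z) = (1/a₂)·(1 − λ·z·∫₀ᶻ ω(t) dt) (segment integral). Then for every z with |z| ≤ p·r one has |F(z)| ≤ p·r·(1 + λ·p²·r²)/(1 + λ·p²) < p·r; in particular F maps the closed disk {z : |z| ≤ p·r} into itself. -/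
open Complex Metric

/-- With `|a₂| = (1 + λ p²)/(p r)` and `F(z) = (1/a₂)(1 - λ z ∫₀ᶻ ω(t) dt)`,
one has `|F(z)| ≤ p r (1 + λ p² r²)/(1 + λ p²) < p r` for `|z| ≤ p r`; in
particular `F` maps the closed disk of radius `p r` into itself. -/
theorem stmt_10 (lam p r : ℝ) (hlam : lam ∈ Set.Ioc (0 : ℝ) 1)
    (hp : p ∈ Set.Ioc (0 : ℝ) 1) (hr : r ∈ Set.Ioo (0 : ℝ) 1)
    (ω : ℂ → ℂ)
    (hω : DifferentiableOn ℂ ω (ball (0 : ℂ) 1))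
    (hbd : ∀ z ∈ ball (0 : ℂ) 1, ‖ω z‖ ≤ 1)
    (a₂ : ℂ) (ha₂ : ‖a₂‖ = (1 + lam * p ^ 2) / (p * r))
    (F : ℂ → ℂ)
    (hF : ∀ z : ℂ, ‖z‖ ≤ p * r →
      F z = (1 / a₂) * (1 - (lam : ℂ) * z * segInt ω 0 z)) :
    (∀ z : ℂ, ‖z‖ ≤ p * r →
        ‖F z‖ ≤ p * r * (1 + lam * p ^ 2 * r ^ 2) / (1 + lam * p ^ 2)) ∧
      p * r * (1 + lam * p ^ 2 * r ^ 2) / (1 + lam * p ^ 2) < p * r ∧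
      Set.MapsTo F (closedBall (0 : ℂ) (p * r)) (closedBall (0 : ℂ) (p * r)) := by
  obtain ⟨hlam0, hlam1⟩ := hlam
  obtain ⟨hp0, hp1⟩ := hp
  obtain ⟨hr0, hr1⟩ := hr
  have hpr0 : 0 < p * r := mul_pos hp0 hr0
  have hpr1 : p * r < 1 := lt_of_le_of_lt (mul_le_of_le_one_left hr0.le hp1) hr1
  have hden : 0 < 1 + lam * p ^ 2 := by positivity
  have key : ∀ z : ℂ, ‖z‖ ≤ p * r →
      ‖F z‖ ≤ p * r * (1 + lam * p ^ 2 * r ^ 2) / (1 + lam * p ^ 2) := by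
    intro z hz
    have hz1 : ‖z‖ < 1 := lt_of_le_of_lt hz hpr1
    have hint : ‖segInt ω 0 z‖ ≤ ‖z‖ := by
      unfold segInt
      rw [norm_mul]
      have : ‖∫ s in (0:ℝ)..(1:ℝ), ω (0 + (s : ℂ) * (z - 0))‖ ≤ 1 := by
        have := intervalIntegral.norm_integral_le_of_norm_le_const
          (a := (0:ℝ)) (b := 1) (C := 1)
          (f := fun s => ω (0 + (s : ℂ) * (z - 0))) ?_
        · simpa using this
        · intro s hs
          rw [Set.uIoc_of_le (by norm_num)] at hs
          apply hbd
          simp only [mem_ball, dist_zero_right, zero_add, sub_zero, norm_mul,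
            Complex.norm_real]
          calc |s| * ‖z‖ ≤ 1 * ‖z‖ := by
                apply mul_le_mul_of_nonneg_right _ (norm_nonneg z)
                rw [abs_le]; constructor <;> [linarith [hs.1]; linarith [hs.2]]
            _ < 1 := by simpa
      calc ‖z - 0‖ * ‖∫ s in (0:ℝ)..(1:ℝ), ω (0 + (s : ℂ) * (z - 0))‖
          ≤ ‖z‖ * 1 := by
            apply mul_le_mul _ this (norm_nonneg _) (norm_nonneg _)
            simp
        _ = ‖z‖ := mul_one _
    have hnum : ‖(1 : ℂ) - (lam : ℂ) * z * segInt ω 0 z‖ ≤ 1 + lam * p ^ 2 * r ^ 2 := by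
      calc ‖(1 : ℂ) - (lam : ℂ) * z * segInt ω 0 z‖
          ≤ ‖(1 : ℂ)‖ + ‖(lam : ℂ) * z * segInt ω 0 z‖ := norm_sub_le _ _
        _ = 1 + lam * (‖z‖ * ‖segInt ω 0 z‖) := by
            rw [norm_one, norm_mul, norm_mul, Complex.norm_real,
              Real.norm_eq_abs, abs_of_pos hlam0, mul_assoc]
        _ ≤ 1 + lam * ((p * r) * (p * r)) := by
            gcongr
            exact hint.trans hz
        _ = 1 + lam * p ^ 2 * r ^ 2 := by ring
    have ha₂ne : a₂ ≠ 0 := by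
      intro h
      rw [h, norm_zero] at ha₂
      have : (0:ℝ) < (1 + lam * p ^ 2) / (p * r) := by positivity
      linarith [this.trans_eq ha₂.symm]
    rw [hF z hz, norm_mul, norm_div, norm_one, ha₂]
    rw [div_mul_eq_mul_div, one_mul, div_div_eq_mul_div, div_le_div_iff₀ (by positivity) hden]
    calc ‖1 - (lam : ℂ) * z * segInt ω 0 z‖ * (p * r) * (1 + lam * p ^ 2)
        ≤ (1 + lam * p ^ 2 * r ^ 2) * (p * r) * (1 + lam * p ^ 2) := by gcongr
      _ = p * r * (1 + lam * p ^ 2 * r ^ 2) * (1 + lam * p ^ 2) := by ring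
  have hlt : p * r * (1 + lam * p ^ 2 * r ^ 2) / (1 + lam * p ^ 2) < p * r := by
    rw [div_lt_iff₀ hden]
    have : lam * p ^ 2 * r ^ 2 < lam * p ^ 2 := by
      have hrr : r ^ 2 < 1 := by nlinarith
      nlinarith [mul_pos hlam0 (pow_pos hp0 2)]
    nlinarith
  refine ⟨key, hlt, ?_⟩
  intro z hz
  simp only [mem_closedBall, dist_zero_right] at hz ⊢
  exact (key z hz).trans hlt.le
end

section
/- Let λ ∈ (0, 1], p ∈ (0, 1], r ∈ (0, 1), let ω be holomorphic on the open unit disk D with |ω(z)| ≤ 1 for all z ∈ D, and let a₂ ∈ ℂ with |a₂| = (1 + λ·p²)/(p·r). Define F(z) = (1/a₂)·(1 − λ·z·∫₀ᶻ ω(t) dt) (segment integral). Then for all z₁, z₂ with |z₁| ≤ p·r and |z₂| ≤ p·r, |F(z₁) − F(z₂)| ≤ (2·λ·r²·p²/(1 + λ·p²))·|z₁ − z₂|, and the Lipschitz constant satisfies 2·λ·r²·p²/(1 + λ·p²) < 1; in particular F is a contraction on the closed disk {z : |z| ≤ p·r}. -/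
open Complex Metric

lemma segInt_from_zero (ω : ℂ → ℂ) (z : ℂ) :
    segInt ω 0 z = z * ∫ s in (0:ℝ)..(1:ℝ), ω ((s : ℂ) * z) := by
  simp [segInt]

lemma continuousOn_aux {f : ℂ → ℂ} (hf : ContinuousOn f (ball (0:ℂ) 1))
    (z : ℂ) (hz : ‖z‖ < 1) :
    ContinuousOn (fun s : ℝ => f ((s : ℂ) * z)) (Set.uIcc (0:ℝ) 1) := by
  apply hf.comp ((Complex.continuous_ofReal.mul continuous_const).continuousOn)
  intro s hs
  rw [Set.uIcc_of_le (zero_le_one)] at hs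
  rw [mem_ball_zero_iff]
  calc ‖(s : ℂ) * z‖ = |s| * ‖z‖ := by
        rw [norm_mul, Complex.norm_real, Real.norm_eq_abs]
    _ ≤ 1 * ‖z‖ := by
        apply mul_le_mul_of_nonneg_right _ (norm_nonneg z)
        rw [abs_le]; exact ⟨by linarith [hs.1], hs.2⟩
    _ < 1 := by rwa [one_mul]

lemma segInt_hasDerivAt (ω : ℂ → ℂ) (hω : DifferentiableOn ℂ ω (ball (0:ℂ) 1))
    (z₀ : ℂ) (hz : ‖z₀‖ < 1) :
    HasDerivAt (fun z => segInt ω 0 z) (ω z₀) z₀ := by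
  have hωa : AnalyticOnNhd ℂ ω (ball (0:ℂ) 1) := hω.analyticOnNhd isOpen_ball
  have hωc : ContinuousOn ω (ball (0:ℂ) 1) := hω.continuousOn
  have hdc : ContinuousOn (deriv ω) (ball (0:ℂ) 1) :=
    (hωa.deriv).continuousOn
  set ε : ℝ := (1 - ‖z₀‖) / 2 with hε_def
  set ρ : ℝ := (1 + ‖z₀‖) / 2 with hρ_def
  have hε : 0 < ε := by simp only [hε_def]; linarith
  have hρ1 : ρ < 1 := by simp only [hρ_def]; linarith
  have hρ0 : (0:ℝ) ≤ ρ := by simp only [hρ_def]; positivity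
  have hsub : closedBall (0:ℂ) ρ ⊆ ball (0:ℂ) 1 := by
    intro x hx
    rw [mem_closedBall_zero_iff] at hx
    rw [mem_ball_zero_iff]; linarith
  obtain ⟨C, hC⟩ := (isCompact_closedBall (0:ℂ) ρ).exists_bound_of_continuousOn
    (hdc.mono hsub)
  have hC0 : 0 ≤ C := le_trans (norm_nonneg _) (hC 0 (by simp [hρ0]))
  -- membership facts
  have hmem : ∀ z : ℂ, z ∈ ball z₀ ε → ∀ s : ℝ, s ∈ Set.uIoc (0:ℝ) 1 →
      (s : ℂ) * z ∈ closedBall (0:ℂ) ρ := by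
    intro z hzb s hs
    rw [mem_ball, dist_eq_norm] at hzb
    rw [Set.uIoc_of_le zero_le_one] at hs
    have hz' : ‖z‖ ≤ ρ := by
      have := norm_sub_norm_le z z₀
      simp only [hρ_def, hε_def] at *
      linarith
    rw [mem_closedBall_zero_iff]
    calc ‖(s : ℂ) * z‖ = |s| * ‖z‖ := by
          rw [norm_mul, Complex.norm_real, Real.norm_eq_abs]
      _ ≤ 1 * ρ := by
          apply mul_le_mul _ hz' (norm_nonneg z) zero_le_one
          rw [abs_le]; exact ⟨by linarith [hs.1], hs.2⟩
      _ = ρ := one_mul ρ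
  have hz₀mem : z₀ ∈ ball z₀ ε := mem_ball_self hε
  have key := intervalIntegral.hasDerivAt_integral_of_dominated_loc_of_deriv_le
    (F := fun (z : ℂ) (s : ℝ) => ω ((s : ℂ) * z))
    (F' := fun (z : ℂ) (s : ℝ) => deriv ω ((s : ℂ) * z) * (s : ℂ))
    (x₀ := z₀) (a := (0:ℝ)) (b := (1:ℝ)) (bound := fun _ => C) (μ := MeasureTheory.volume)
    (ball_mem_nhds z₀ hε) ?_ ?_ ?_ ?_ ?_ ?_
  · -- key.2 : HasDerivAt (fun z => ∫ s in 0..1, ω (s z)) (∫ s in 0..1, deriv ω (s z₀) * s) z₀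
    have hg := key.2
    have hmul : HasDerivAt (fun z : ℂ => z * ∫ s in (0:ℝ)..1, ω ((s:ℂ) * z))
        (1 * (∫ s in (0:ℝ)..1, ω ((s:ℂ) * z₀)) +
          z₀ * ∫ s in (0:ℝ)..1, deriv ω ((s:ℂ) * z₀) * (s:ℂ)) z₀ :=
      (hasDerivAt_id z₀).mul hg
    have hD : (1 * (∫ s in (0:ℝ)..1, ω ((s:ℂ) * z₀)) +
        z₀ * ∫ s in (0:ℝ)..1, deriv ω ((s:ℂ) * z₀) * (s:ℂ)) = ω z₀ := by
      -- FTC for φ s = s * ω (s z₀)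
      have hball : ∀ s : ℝ, s ∈ Set.uIcc (0:ℝ) 1 → (s : ℂ) * z₀ ∈ ball (0:ℂ) 1 := by
        intro s hs
        rw [Set.uIcc_of_le zero_le_one] at hs
        rw [mem_ball_zero_iff]
        calc ‖(s : ℂ) * z₀‖ = |s| * ‖z₀‖ := by
              rw [norm_mul, Complex.norm_real, Real.norm_eq_abs]
          _ ≤ 1 * ‖z₀‖ := by
              apply mul_le_mul_of_nonneg_right _ (norm_nonneg z₀)
              rw [abs_le]; exact ⟨by linarith [hs.1], hs.2⟩
          _ < 1 := by rwa [one_mul]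
      have hφ : ∀ s ∈ Set.uIcc (0:ℝ) 1,
          HasDerivAt (fun s : ℝ => (s : ℂ) * ω ((s : ℂ) * z₀))
            (1 * ω ((s:ℂ) * z₀) + (s:ℂ) * (deriv ω ((s:ℂ) * z₀) * z₀)) s := by
        intro s hs
        have h1 : HasDerivAt (fun s : ℝ => (s : ℂ)) 1 s := by
          exact Complex.ofRealCLM.hasDerivAt (x := s)
        have hω' : HasDerivAt ω (deriv ω ((s:ℂ) * z₀)) ((s:ℂ) * z₀) :=
          ((hω.differentiableAt (isOpen_ball.mem_nhds (hball s hs))).hasDerivAt)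
        have hinner : HasDerivAt (fun w : ℂ => ω (w * z₀)) (deriv ω ((s:ℂ) * z₀) * z₀)
            ((s : ℂ)) := by
          have h2 : HasDerivAt (fun w : ℂ => w * z₀) z₀ ((s:ℂ)) := hasDerivAt_mul_const z₀
          exact hω'.comp ((s:ℂ)) h2
        have hcomp : HasDerivAt (fun s : ℝ => ω ((s:ℂ) * z₀)) (deriv ω ((s:ℂ) * z₀) * z₀)
            s := hinner.comp_ofReal
        exact h1.mul hcomp
      have hint1 : IntervalIntegrable (fun s : ℝ => ω ((s:ℂ) * z₀))
          MeasureTheory.volume 0 1 := (continuousOn_aux hωc z₀ hz).intervalIntegrable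
      have hint2 : IntervalIntegrable (fun s : ℝ => (s:ℂ) * (deriv ω ((s:ℂ) * z₀) * z₀))
          MeasureTheory.volume 0 1 := by
        apply ContinuousOn.intervalIntegrable
        exact (Complex.continuous_ofReal.continuousOn).mul
          ((continuousOn_aux hdc z₀ hz).mul continuousOn_const)
      have hftc := intervalIntegral.integral_eq_sub_of_hasDerivAt hφ
        (by
          apply IntervalIntegrable.add
          · simpa using hint1
          · exact hint2)
      have hsplit : (∫ s in (0:ℝ)..1,
            (1 * ω ((s:ℂ) * z₀) + (s:ℂ) * (deriv ω ((s:ℂ) * z₀) * z₀)))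
          = (∫ s in (0:ℝ)..1, ω ((s:ℂ) * z₀)) +
            ∫ s in (0:ℝ)..1, (s:ℂ) * (deriv ω ((s:ℂ) * z₀) * z₀) := by
        rw [← intervalIntegral.integral_add (by simpa using hint1) hint2]
        simp
      have hval : ((1:ℝ) : ℂ) * ω (((1:ℝ):ℂ) * z₀) - ((0:ℝ):ℂ) * ω (((0:ℝ):ℂ) * z₀)
          = ω z₀ := by push_cast; simp
      rw [hsplit, hval] at hftc
      have hmulconst : (∫ s in (0:ℝ)..1, (s:ℂ) * (deriv ω ((s:ℂ) * z₀) * z₀))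
          = (∫ s in (0:ℝ)..1, deriv ω ((s:ℂ) * z₀) * (s:ℂ)) * z₀ := by
        rw [← intervalIntegral.integral_mul_const]
        congr 1; funext s; ring
      rw [hmulconst] at hftc
      rw [one_mul]
      rw [mul_comm z₀]
      linear_combination hftc
    rw [hD] at hmul
    have : (fun z : ℂ => segInt ω 0 z) = fun z : ℂ => z * ∫ s in (0:ℝ)..1, ω ((s:ℂ) * z) := by
      funext z; exact segInt_from_zero ω z
    rw [this]
    exact hmul
  · -- hF_meas
    filter_upwards [ball_mem_nhds z₀ hε] with z hzb
    have hz1 : ‖z‖ < 1 := by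
      rw [mem_ball, dist_eq_norm] at hzb
      have := norm_sub_norm_le z z₀
      simp only [hε_def] at hzb
      linarith
    exact ((continuousOn_aux hωc z hz1).mono
      (Set.uIoc_subset_uIcc)).aestronglyMeasurable measurableSet_uIoc
  · exact (continuousOn_aux hωc z₀ hz).intervalIntegrable
  · exact (((continuousOn_aux hdc z₀ hz).mul
      Complex.continuous_ofReal.continuousOn).mono
      Set.uIoc_subset_uIcc).aestronglyMeasurable measurableSet_uIoc
  · -- h_bound
    apply Filter.Eventually.of_forall
    intro s hs z hzb
    have hmem' := hmem z hzb s hs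
    rw [Set.uIoc_of_le zero_le_one] at hs
    calc ‖deriv ω ((s:ℂ) * z) * (s:ℂ)‖ = ‖deriv ω ((s:ℂ) * z)‖ * |s| := by
          rw [norm_mul, Complex.norm_real, Real.norm_eq_abs]
      _ ≤ C * 1 := by
          apply mul_le_mul (hC _ hmem') _ (abs_nonneg s) hC0
          rw [abs_le]; exact ⟨by linarith [hs.1], hs.2⟩
      _ = C := mul_one C
  · exact intervalIntegrable_const
  · -- h_diff
    apply Filter.Eventually.of_forall
    intro s hs z hzb
    have hmem' : (s:ℂ) * z ∈ ball (0:ℂ) 1 := hsub (hmem z hzb s hs)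
    have hω' : HasDerivAt ω (deriv ω ((s:ℂ) * z)) ((s:ℂ) * z) :=
      (hω.differentiableAt (isOpen_ball.mem_nhds hmem')).hasDerivAt
    have h2 : HasDerivAt (fun z : ℂ => (s:ℂ) * z) ((s:ℂ)) z := by
      simpa using (hasDerivAt_id z).const_mul ((s:ℂ))
    exact hω'.comp z h2

/-- With `|a₂| = (1 + λ p²)/(p r)` and `F(z) = (1/a₂)(1 - λ z ∫₀ᶻ ω(t) dt)`,
`F` is Lipschitz on the closed disk `{|z| ≤ p r}` with constant
`2 λ r² p²/(1 + λ p²) < 1`; in particular `F` is a contraction there. -/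
theorem stmt_11 (lam p r : ℝ) (hlam : lam ∈ Set.Ioc (0 : ℝ) 1)
    (hp : p ∈ Set.Ioc (0 : ℝ) 1) (hr : r ∈ Set.Ioo (0 : ℝ) 1)
    (ω : ℂ → ℂ)
    (hω : DifferentiableOn ℂ ω (ball (0 : ℂ) 1))
    (hbd : ∀ z ∈ ball (0 : ℂ) 1, ‖ω z‖ ≤ 1)
    (a₂ : ℂ) (ha₂ : ‖a₂‖ = (1 + lam * p ^ 2) / (p * r))
    (F : ℂ → ℂ)
    (hF : ∀ z : ℂ, ‖z‖ ≤ p * r →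
      F z = (1 / a₂) * (1 - (lam : ℂ) * z * segInt ω 0 z)) :
    (∀ z₁ : ℂ, ‖z₁‖ ≤ p * r → ∀ z₂ : ℂ, ‖z₂‖ ≤ p * r →
        ‖F z₁ - F z₂‖ ≤ 2 * lam * r ^ 2 * p ^ 2 / (1 + lam * p ^ 2) * ‖z₁ - z₂‖) ∧
      2 * lam * r ^ 2 * p ^ 2 / (1 + lam * p ^ 2) < 1 := by
  obtain ⟨hlam0, hlam1⟩ := hlam
  obtain ⟨hp0, hp1⟩ := hp
  obtain ⟨hr0, hr1⟩ := hr
  set ρ : ℝ := p * r with hρ_def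
  have hρ0 : 0 < ρ := mul_pos hp0 hr0
  have hρ1 : ρ < 1 := by
    calc p * r ≤ 1 * r := mul_le_mul_of_nonneg_right hp1 hr0.le
      _ = r := one_mul r
      _ < 1 := hr1
  have hden : 0 < 1 + lam * p ^ 2 := by positivity
  -- the function H z = z * segInt ω 0 z is Lipschitz with constant 2ρ on closedBall 0 ρ
  set H : ℂ → ℂ := fun z => z * segInt ω 0 z with hH_def
  set H' : ℂ → ℂ := fun z => segInt ω 0 z + z * ω z with hH'_def
  have hderiv : ∀ z ∈ closedBall (0:ℂ) ρ, HasDerivWithinAt H (H' z) (closedBall (0:ℂ) ρ) z := by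
    intro z hz
    rw [mem_closedBall_zero_iff] at hz
    have hz1 : ‖z‖ < 1 := lt_of_le_of_lt hz hρ1
    have := (hasDerivAt_id z).mul (segInt_hasDerivAt ω hω z hz1)
    simp only [one_mul, id] at this
    exact this.hasDerivWithinAt
  have hsegbd : ∀ z : ℂ, ‖z‖ ≤ ρ → ‖segInt ω 0 z‖ ≤ ‖z‖ := by
    intro z hz
    rw [segInt_from_zero, norm_mul]
    have : ‖∫ s in (0:ℝ)..1, ω ((s:ℂ) * z)‖ ≤ 1 * |1 - 0| := by
      apply intervalIntegral.norm_integral_le_of_norm_le_const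
      intro s hs
      rw [Set.uIoc_of_le zero_le_one] at hs
      apply hbd
      rw [mem_ball_zero_iff]
      calc ‖(s : ℂ) * z‖ = |s| * ‖z‖ := by
            rw [norm_mul, Complex.norm_real, Real.norm_eq_abs]
        _ ≤ 1 * ρ := by
            apply mul_le_mul _ hz (norm_nonneg z) zero_le_one
            rw [abs_le]; exact ⟨by linarith [hs.1], hs.2⟩
        _ < 1 := by rwa [one_mul]
    calc ‖z‖ * ‖∫ s in (0:ℝ)..1, ω ((s:ℂ) * z)‖ ≤ ‖z‖ * 1 := by
          apply mul_le_mul_of_nonneg_left _ (norm_nonneg z)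
          simpa using this
      _ = ‖z‖ := mul_one _
  have hbound : ∀ z ∈ closedBall (0:ℂ) ρ, ‖H' z‖ ≤ 2 * ρ := by
    intro z hz
    rw [mem_closedBall_zero_iff] at hz
    have h1 : ‖segInt ω 0 z‖ ≤ ρ := le_trans (hsegbd z hz) hz
    have h2 : ‖z * ω z‖ ≤ ρ := by
      rw [norm_mul]
      calc ‖z‖ * ‖ω z‖ ≤ ρ * 1 := by
            apply mul_le_mul hz _ (norm_nonneg _) hρ0.le
            exact hbd z (by rw [mem_ball_zero_iff]; exact lt_of_le_of_lt hz hρ1)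
        _ = ρ := mul_one ρ
    calc ‖H' z‖ ≤ ‖segInt ω 0 z‖ + ‖z * ω z‖ := norm_add_le _ _
      _ ≤ 2 * ρ := by linarith
  constructor
  · intro z₁ hz₁ z₂ hz₂
    have hz₁' : z₁ ∈ closedBall (0:ℂ) ρ := by rwa [mem_closedBall_zero_iff]
    have hz₂' : z₂ ∈ closedBall (0:ℂ) ρ := by rwa [mem_closedBall_zero_iff]
    have hHlip : ‖H z₂ - H z₁‖ ≤ 2 * ρ * ‖z₂ - z₁‖ :=
      (convex_closedBall (0:ℂ) ρ).norm_image_sub_le_of_norm_hasDerivWithin_le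
        hderiv hbound hz₁' hz₂'
    have hdiffF : F z₁ - F z₂ = 1 / a₂ * ((lam : ℂ) * (H z₂ - H z₁)) := by
      rw [hF z₁ hz₁, hF z₂ hz₂]
      simp only [hH_def]
      ring
    have ha₂0 : a₂ ≠ 0 := by
      intro h
      rw [h, norm_zero] at ha₂
      have : (0:ℝ) < (1 + lam * p ^ 2) / (p * r) := by positivity
      linarith [this.ne' ha₂.symm]
    have hnorm : ‖F z₁ - F z₂‖ = ρ / (1 + lam * p ^ 2) * (lam * ‖H z₂ - H z₁‖) := by
      rw [hdiffF, norm_mul, norm_mul, norm_div, norm_one, ha₂,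
        Complex.norm_real, Real.norm_eq_abs, abs_of_pos hlam0, one_div_div]
    rw [hnorm]
    have hzz : ‖z₂ - z₁‖ = ‖z₁ - z₂‖ := norm_sub_rev z₂ z₁
    calc ρ / (1 + lam * p ^ 2) * (lam * ‖H z₂ - H z₁‖)
        ≤ ρ / (1 + lam * p ^ 2) * (lam * (2 * ρ * ‖z₂ - z₁‖)) := by
          apply mul_le_mul_of_nonneg_left _ (by positivity)
          exact mul_le_mul_of_nonneg_left hHlip hlam0.le
      _ = 2 * lam * r ^ 2 * p ^ 2 / (1 + lam * p ^ 2) * ‖z₁ - z₂‖ := by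
          rw [hzz, hρ_def]
          field_simp
  · rw [div_lt_one hden]
    have h1 : lam * p ^ 2 ≤ 1 := by nlinarith
    have hlp : 0 < lam * p ^ 2 := by positivity
    have h2 : lam * p ^ 2 * r ^ 2 < lam * p ^ 2 * 1 := by
      apply mul_lt_mul_of_pos_left _ hlp
      nlinarith
    nlinarith
end

section
/- Let λ ∈ (0, 1], p ∈ (0, 1], and θ, φ ∈ ℝ. If the quadratic polynomial Q(z) = 1 − ((1 + λ·p²)/p)·e^{iθ}·z − λ·e^{iφ}·z² has no zero in the disk {z ∈ ℂ : |z| < p}, then e^{iφ} = −e^{2iθ}, i.e. Q(z) = 1 − ((1 + λ·p²)/p)·e^{iθ}·z + λ·e^{2iθ}·z² = (1 − e^{iθ}·z/p)·(1 − λ·p·e^{iθ}·z). -/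
open Complex

/-- The only zero-free quadratics: if
`Q(z) = 1 - ((1 + λ p²)/p) e^{iθ} z - λ e^{iφ} z²` has no zero in `{|z| < p}`,
then `e^{iφ} = -e^{2iθ}`, i.e.
`Q(z) = 1 - ((1 + λ p²)/p) e^{iθ} z + λ e^{2iθ} z²
      = (1 - e^{iθ} z / p)(1 - λ p e^{iθ} z)`. -/
theorem stmt_15 (lam p : ℝ) (hlam : lam ∈ Set.Ioc (0 : ℝ) 1)
    (hp : p ∈ Set.Ioc (0 : ℝ) 1)
    (θ φ : ℝ)
    (Q : ℂ → ℂ)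
    (hQ : ∀ z : ℂ, Q z =
      1 - (((1 + lam * p ^ 2) / p : ℝ) : ℂ) * Complex.exp (θ * Complex.I) * z
        - (lam : ℂ) * Complex.exp (φ * Complex.I) * z ^ 2)
    (hnozero : ∀ z : ℂ, ‖z‖ < p → Q z ≠ 0) :
    Complex.exp (φ * Complex.I) = -Complex.exp (2 * θ * Complex.I) ∧
      ∀ z : ℂ, Q z =
        (1 - Complex.exp (θ * Complex.I) * z / p) *
          (1 - (lam : ℂ) * p * Complex.exp (θ * Complex.I) * z) := by
  obtain ⟨hlam0, hlam1⟩ := hlam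
  obtain ⟨hp0, hp1⟩ := hp
  have hpne : (p : ℂ) ≠ 0 := by exact_mod_cast hp0.ne'
  set E : ℂ := Complex.exp (θ * Complex.I) with hE
  set c : ℝ := (1 + lam * p ^ 2) / p with hc
  have hcpos : 0 < c := by positivity
  obtain ⟨d, hd⟩ : ∃ d : ℂ, d ^ 2 = ((c : ℂ) * E) ^ 2 + 4 * lam * Complex.exp (φ * Complex.I) :=
    IsAlgClosed.exists_pow_nat_eq _ (by norm_num)
  set a : ℂ := ((c : ℂ) * E + d) / 2 with ha
  set b : ℂ := ((c : ℂ) * E - d) / 2 with hb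
  have hsum : a + b = (c : ℂ) * E := by rw [ha, hb]; ring
  have hprod : a * b = -(lam : ℂ) * Complex.exp (φ * Complex.I) := by
    rw [ha, hb]; linear_combination (-(1 : ℂ)/4) * hd
  have hprodne : a * b ≠ 0 := by
    rw [hprod]
    simp [Complex.exp_ne_zero, hlam0.ne']
  have hane : a ≠ 0 := left_ne_zero_of_mul hprodne
  have hbne : b ≠ 0 := right_ne_zero_of_mul hprodne
  have hfac : ∀ z : ℂ, Q z = (1 - a * z) * (1 - b * z) := by
    intro z
    rw [hQ z, ha, hb]
    linear_combination (z ^ 2 / 4) * hd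
  have hEnorm : ‖E‖ = 1 := by
    rw [hE, Complex.norm_exp_ofReal_mul_I]
  have hkey : ∀ x : ℂ, x ≠ 0 → (∀ z : ℂ, Q z = (1 - x * z) * (1 - b * z) ∨
      Q z = (1 - a * z) * (1 - x * z)) → ‖x‖ ≤ 1 / p := by
    intro x hx hfx
    by_contra h
    push_neg at h
    have hx0 : 0 < ‖x‖ := lt_trans (by positivity) h
    have hxinv : ‖x⁻¹‖ < p := by
      rw [norm_inv, inv_lt_comm₀ hx0 hp0]
      rwa [one_div] at h
    refine hnozero x⁻¹ hxinv ?_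
    rcases hfx x⁻¹ with h' | h' <;> rw [h']
    · rw [mul_inv_cancel₀ hx]; ring
    · rw [mul_inv_cancel₀ hx]; ring
  have hna : ‖a‖ ≤ 1 / p := hkey a hane (fun z => Or.inl (hfac z))
  have hnb : ‖b‖ ≤ 1 / p := hkey b hbne (fun z => Or.inr (hfac z))
  have hnab : ‖a‖ * ‖b‖ = lam := by
    rw [← norm_mul, hprod]
    simp only [norm_mul, norm_neg, Complex.norm_exp_ofReal_mul_I]
    simp [abs_of_pos hlam0]
  have hnsum : ‖a + b‖ = c := by
    rw [hsum, norm_mul, hEnorm, mul_one, Complex.norm_real, Real.norm_eq_abs,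
      abs_of_pos hcpos]
  -- equality in the triangle inequality
  have hna' : ‖a‖ * p ≤ 1 := (le_div_iff₀ hp0).mp hna
  have hnb' : ‖b‖ * p ≤ 1 := (le_div_iff₀ hp0).mp hnb
  have hcp : c * p = 1 + lam * p ^ 2 := by
    rw [hc]; field_simp
  have hsumle : ‖a‖ + ‖b‖ ≤ c := by
    have hmp : (‖a‖ + ‖b‖) * p ≤ c * p := by
      rw [hcp]
      nlinarith [mul_nonneg (sub_nonneg.mpr hna') (sub_nonneg.mpr hnb'), hnab,
        sq_nonneg p, hp0.le]
    exact le_of_mul_le_mul_right hmp hp0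
  have htri : ‖a + b‖ = ‖a‖ + ‖b‖ := by
    have h1 : ‖a + b‖ ≤ ‖a‖ + ‖b‖ := norm_add_le a b
    rw [hnsum]
    linarith [hnsum ▸ h1]
  have hray : SameRay ℝ a b := sameRay_iff_norm_add.mpr htri
  obtain ⟨r, hr0, hrab⟩ := hray.exists_nonneg_left hane
  have hrC : (r : ℂ) * a = b := by rw [← hrab]; simp [Complex.real_smul]
  have hrpos : 0 < r := by
    rcases hr0.lt_or_eq with h | h
    · exact h
    · exfalso; apply hbne; rw [← hrC, ← h]; simp
  have h1r : (1 + (r : ℂ)) * a = (c : ℂ) * E := by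
    linear_combination hsum + hrC
  have h1rne : (1 : ℝ) + r ≠ 0 := by positivity
  have h2C : ((1 : ℂ) + (r : ℂ)) ^ 2 ≠ 0 :=
    pow_ne_zero 2 (by exact_mod_cast h1rne)
  have hsq : ((1 : ℂ) + (r : ℂ)) ^ 2 * a ^ 2 = (c : ℂ) ^ 2 * E ^ 2 := by
    linear_combination ((1 + (r : ℂ)) * a + (c : ℂ) * E) * h1r
  have hab : a * b = (r : ℂ) * a ^ 2 := by linear_combination (-a) * hrC
  have ha2 : a ^ 2 = (c : ℂ) ^ 2 * E ^ 2 / ((1 : ℂ) + (r : ℂ)) ^ 2 := by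
    rw [eq_div_iff h2C]; linear_combination hsq
  set k : ℝ := r * c ^ 2 / (1 + r) ^ 2 with hk
  have hkC : (k : ℂ) = (r : ℂ) * (c : ℂ) ^ 2 / ((1 : ℂ) + (r : ℂ)) ^ 2 := by
    rw [hk]; push_cast; ring
  have hab2 : a * b = (k : ℂ) * E ^ 2 := by
    rw [hab, ha2, hkC]; ring
  have hkpos : 0 < k := by rw [hk]; positivity
  have hklam : k = lam := by
    have h6 : ‖a * b‖ = k := by
      rw [hab2, norm_mul, norm_pow, hEnorm, one_pow, mul_one, Complex.norm_real,
        Real.norm_eq_abs, abs_of_pos hkpos]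
    rw [norm_mul, hnab] at h6
    linarith
  have hE2 : Complex.exp (2 * θ * Complex.I) = E ^ 2 := by
    rw [hE, sq, ← Complex.exp_add]
    congr 1
    push_cast
    ring
  have hlamne : (lam : ℂ) ≠ 0 := by exact_mod_cast hlam0.ne'
  have this2 : -(lam : ℂ) * Complex.exp (φ * Complex.I) = (lam : ℂ) * E ^ 2 := by
    rw [← hprod, hab2, hklam]
  have hmain : Complex.exp (φ * Complex.I) = -Complex.exp (2 * θ * Complex.I) := by
    rw [hE2]
    refine mul_left_cancel₀ hlamne ?_
    linear_combination -this2
  refine ⟨hmain, fun z => ?_⟩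
  rw [hQ z, hmain, hE2]
  have hcC : (c : ℂ) = (1 + (lam : ℂ) * (p : ℂ) ^ 2) / (p : ℂ) := by
    rw [hc]; push_cast; ring
  rw [hcC]
  field_simp
  ring
end
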